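/- arXiv:2603.08634 — 12 statements merged into one kernel-verified Lean document; each statement's English description precedes it below -/
import Mathlib

section
/- Let A_i, A_j, A_h, A_k, ε_{ij}, ε_{hk}, ε_{ik}, ε_{jh}, δ_{ij}, δ_{hk}, δ_{ik}, δ_{jh}, and c be real numbers. For each pair (a,b) set v_{ab} := A_a + A_b + ε_{ab} and Y_{ab} := 1 if v_{ab} ≤ δ_{ab} and Y_{ab} := 0 otherwise. Then (1 − Y_{ij}) · (1 − Y_{hk}) · Y_{ik} · Y_{jh} · 1{δ_{ij} + δ_{hk} − δ_{ik} − δ_{jh} > c} ≤ 1{ε_{ij} + ε_{hk} − ε_{ik} − ε_{jh} > c}. -/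
/-- Flipped pointwise tetrad bound: the flipped tetrad event
`Y_ij = Y_hk = 0, Y_ik = Y_jh = 1` intersected with `{Δδ > c}` implies
`{Δε > c}`, stated as an inequality between (products of) indicators. -/
theorem tetrad_pointwise_bound_flipped
    (Ai Aj Ah Ak εij εhk εik εjh δij δhk δik δjh c : ℝ)
    (vij vhk vik vjh : ℝ)
    (hvij : vij = Ai + Aj + εij) (hvhk : vhk = Ah + Ak + εhk)
    (hvik : vik = Ai + Ak + εik) (hvjh : vjh = Aj + Ah + εjh)
    (Yij Yhk Yik Yjh : ℝ)
    (hYij : Yij = if vij ≤ δij then (1 : ℝ) else 0)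
    (hYhk : Yhk = if vhk ≤ δhk then (1 : ℝ) else 0)
    (hYik : Yik = if vik ≤ δik then (1 : ℝ) else 0)
    (hYjh : Yjh = if vjh ≤ δjh then (1 : ℝ) else 0) :
    (1 - Yij) * (1 - Yhk) * Yik * Yjh *
        (if c < δij + δhk - δik - δjh then (1 : ℝ) else 0)
      ≤ (if c < εij + εhk - εik - εjh then (1 : ℝ) else 0) := by
  subst hvij hvhk hvik hvjh hYij hYhk hYik hYjh
  by_cases h1 : Ai + Aj + εij ≤ δij <;>
  by_cases h2 : Ah + Ak + εhk ≤ δhk <;>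
  by_cases h3 : Ai + Ak + εik ≤ δik <;>
  by_cases h4 : Aj + Ah + εjh ≤ δjh <;>
  by_cases h5 : c < δij + δhk - δik - δjh <;>
  simp only [h1, h2, h3, h4, h5, if_true, if_false, ite_true, ite_false] <;>
  split <;> simp <;> linarith
end

section
/- Let (Ω, F, P) be a probability space, let Z be a random variable taking values in a measurable space, and let ε_{ij}, ε_{hk}, ε_{ik}, ε_{jh} be real random variables such that the random vector (ε_{ij}, ε_{hk}, ε_{ik}, ε_{jh}) is independent of the σ-algebra σ(Z) generated by Z. Let A_i, A_j, A_h, A_k and δ_{ij}, δ_{hk}, δ_{ik}, δ_{jh} be arbitrary real random variables (the δ's may depend on the shocks and fixed effects, accommodating endogenous covariates), and define Y_{ab} := 1{A_a + A_b + ε_{ab} ≤ δ_{ab}}. Then for every c ∈ ℝ, almost surely, E[ Y_{ij} Y_{hk} (1 − Y_{ik}) (1 − Y_{jh}) · 1{δ_{ij} + δ_{hk} − δ_{ik} − δ_{jh} ≤ c} | σ(Z) ] ≤ P(ε_{ij} + ε_{hk} − ε_{ik} − ε_{jh} ≤ c). -/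
open MeasureTheory ProbabilityTheory

/-- Conditional lower-bound tetrad restriction (bound_L): the conditional
expectation given `σ(Z)` of the tetrad-event indicator intersected with
`{Δδ ≤ c}` is a.s. bounded by the unconditional probability `P(Δε ≤ c)`,
provided the shock vector is independent of `Z`. -/
theorem tetrad_condexp_lower_bound
    {Ω : Type*} [MeasurableSpace Ω] (P : Measure Ω) [IsProbabilityMeasure P]
    {β : Type*} [MeasurableSpace β] (Z : Ω → β) (hZ : Measurable Z)
    (εij εhk εik εjh : Ω → ℝ)
    (hεij : Measurable εij) (hεhk : Measurable εhk)
    (hεik : Measurable εik) (hεjh : Measurable εjh)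
    (hindep : IndepFun (fun ω => (εij ω, εhk ω, εik ω, εjh ω)) Z P)
    (Ai Aj Ah Ak δij δhk δik δjh : Ω → ℝ)
    (hAi : Measurable Ai) (hAj : Measurable Aj)
    (hAh : Measurable Ah) (hAk : Measurable Ak)
    (hδij : Measurable δij) (hδhk : Measurable δhk)
    (hδik : Measurable δik) (hδjh : Measurable δjh)
    (Yij Yhk Yik Yjh : Ω → ℝ)
    (hYij : Yij = fun ω => if Ai ω + Aj ω + εij ω ≤ δij ω then (1 : ℝ) else 0)
    (hYhk : Yhk = fun ω => if Ah ω + Ak ω + εhk ω ≤ δhk ω then (1 : ℝ) else 0)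
    (hYik : Yik = fun ω => if Ai ω + Ak ω + εik ω ≤ δik ω then (1 : ℝ) else 0)
    (hYjh : Yjh = fun ω => if Aj ω + Ah ω + εjh ω ≤ δjh ω then (1 : ℝ) else 0)
    (c : ℝ) :
    ∀ᵐ ω ∂P,
      (P[fun ω => Yij ω * Yhk ω * (1 - Yik ω) * (1 - Yjh ω) *
            (if δij ω + δhk ω - δik ω - δjh ω ≤ c then (1 : ℝ) else 0)
          | MeasurableSpace.comap Z inferInstance]) ω
        ≤ (P {ω | εij ω + εhk ω - εik ω - εjh ω ≤ c}).toReal := by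
  classical
  set X : Ω → ℝ × ℝ × ℝ × ℝ := fun ω => (εij ω, εhk ω, εik ω, εjh ω) with hX
  have hXm : Measurable X := by
    exact (hεij.prodMk (hεhk.prodMk (hεik.prodMk hεjh)))
  set f : Ω → ℝ := fun ω => Yij ω * Yhk ω * (1 - Yik ω) * (1 - Yjh ω) *
      (if δij ω + δhk ω - δik ω - δjh ω ≤ c then (1 : ℝ) else 0) with hf
  set g : Ω → ℝ := fun ω => if εij ω + εhk ω - εik ω - εjh ω ≤ c then (1 : ℝ) else 0 with hg
  have hfg : ∀ ω, f ω ≤ g ω := by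
    intro ω
    simp only [hf, hg, hYij, hYhk, hYik, hYjh]
    split_ifs <;> norm_num <;> linarith
  have hfm : Measurable f := by
    subst hYij hYhk hYik hYjh
    refine Measurable.mul ?_ ?_
    · refine ((Measurable.mul ?_ ?_).mul ?_).mul ?_
      · exact Measurable.ite (measurableSet_le (hAi.add hAj |>.add hεij) hδij) measurable_const measurable_const
      · exact Measurable.ite (measurableSet_le (hAh.add hAk |>.add hεhk) hδhk) measurable_const measurable_const
      · exact measurable_const.sub (Measurable.ite (measurableSet_le (hAi.add hAk |>.add hεik) hδik) measurable_const measurable_const)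
      · exact measurable_const.sub (Measurable.ite (measurableSet_le (hAj.add hAh |>.add hεjh) hδjh) measurable_const measurable_const)
    · exact Measurable.ite (measurableSet_le ((hδij.add hδhk).sub hδik |>.sub hδjh) measurable_const) measurable_const measurable_const
  have hgm : Measurable g :=
    Measurable.ite (measurableSet_le ((hεij.add hεhk).sub hεik |>.sub hεjh) measurable_const)
      measurable_const measurable_const
  have hfb : ∀ ω, ‖f ω‖ ≤ 1 := by
    intro ω
    simp only [hf, hYij, hYhk, hYik, hYjh, Real.norm_eq_abs]
    split_ifs <;> norm_num
  have hgb : ∀ ω, ‖g ω‖ ≤ 1 := by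
    intro ω
    simp only [hg, Real.norm_eq_abs]
    split_ifs <;> norm_num
  have hfint : Integrable f P :=
    Integrable.mono' (integrable_const 1) hfm.aestronglyMeasurable (ae_of_all _ hfb)
  have hgint : Integrable g P :=
    Integrable.mono' (integrable_const 1) hgm.aestronglyMeasurable (ae_of_all _ hgb)
  -- g is measurable wrt comap X
  have hs : MeasurableSet {x : ℝ × ℝ × ℝ × ℝ | x.1 + x.2.1 - x.2.2.1 - x.2.2.2 ≤ c} :=
    measurableSet_le (((measurable_fst.add (measurable_fst.comp measurable_snd)).sub
      (measurable_fst.comp (measurable_snd.comp measurable_snd))).sub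
      (measurable_snd.comp (measurable_snd.comp measurable_snd))) measurable_const
  have hgm' : StronglyMeasurable[MeasurableSpace.comap X inferInstance] g := by
    have hpre : MeasurableSet[MeasurableSpace.comap X inferInstance]
        (X ⁻¹' {x : ℝ × ℝ × ℝ × ℝ | x.1 + x.2.1 - x.2.2.1 - x.2.2.2 ≤ c}) := ⟨_, hs, rfl⟩
    have : g = fun ω => if ω ∈ X ⁻¹' {x : ℝ × ℝ × ℝ × ℝ | x.1 + x.2.1 - x.2.2.1 - x.2.2.2 ≤ c}
        then (1:ℝ) else 0 := rfl
    rw [this]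
    exact StronglyMeasurable.ite hpre stronglyMeasurable_const stronglyMeasurable_const
  have hcond : P[g | MeasurableSpace.comap Z inferInstance]
      =ᵐ[P] fun _ => ∫ ω, g ω ∂P :=
    condExp_indep_eq hXm.comap_le hZ.comap_le hgm' hindep
  have hmono : P[f | MeasurableSpace.comap Z inferInstance]
      ≤ᵐ[P] P[g | MeasurableSpace.comap Z inferInstance] :=
    condExp_mono hfint hgint (ae_of_all _ hfg)
  have hint : ∫ ω, g ω ∂P = (P {ω | εij ω + εhk ω - εik ω - εjh ω ≤ c}).toReal := by
    have : g = Set.indicator {ω | εij ω + εhk ω - εik ω - εjh ω ≤ c} (fun _ => (1:ℝ)) := by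
      funext ω; simp [hg, Set.indicator_apply]
    rw [this, integral_indicator_const, smul_eq_mul, mul_one]
    · rfl
    exact measurableSet_le ((hεij.add hεhk).sub hεik |>.sub hεjh) measurable_const
  filter_upwards [hcond, hmono] with ω h1 h2
  calc (P[f | MeasurableSpace.comap Z inferInstance]) ω
      ≤ (P[g | MeasurableSpace.comap Z inferInstance]) ω := h2
    _ = ∫ ω, g ω ∂P := h1
    _ = _ := hint
end

section
/- Let (Ω, F, P) be a probability space, let Z be a random variable taking values in a measurable space, and let ε_{ij}, ε_{hk}, ε_{ik}, ε_{jh} be real random variables such that the random vector (ε_{ij}, ε_{hk}, ε_{ik}, ε_{jh}) is independent of the σ-algebra σ(Z) generated by Z. Let A_i, A_j, A_h, A_k and δ_{ij}, δ_{hk}, δ_{ik}, δ_{jh} be arbitrary real random variables, and define Y_{ab} := 1{A_a + A_b + ε_{ab} ≤ δ_{ab}}. Then for every c ∈ ℝ, almost surely, E[ (1 − Y_{ij}) (1 − Y_{hk}) Y_{ik} Y_{jh} · 1{δ_{ij} + δ_{hk} − δ_{ik} − δ_{jh} > c} | σ(Z) ] ≤ 1 − P(ε_{ij} + ε_{hk}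 − ε_{ik} − ε_{jh} ≤ c). -/
open MeasureTheory ProbabilityTheory

/-- Conditional upper-bound tetrad restriction (bound_U): the conditional
expectation given `σ(Z)` of the flipped tetrad-event indicator intersected
with `{Δδ > c}` is a.s. bounded by `1 - P(Δε ≤ c)`, provided the shock
vector is independent of `Z`. -/
theorem tetrad_condexp_upper_bound
    {Ω : Type*} [MeasurableSpace Ω] (P : Measure Ω) [IsProbabilityMeasure P]
    {β : Type*} [MeasurableSpace β] (Z : Ω → β) (hZ : Measurable Z)
    (εij εhk εik εjh : Ω → ℝ)
    (hεij : Measurable εij) (hεhk : Measurable εhk)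
    (hεik : Measurable εik) (hεjh : Measurable εjh)
    (hindep : IndepFun (fun ω => (εij ω, εhk ω, εik ω, εjh ω)) Z P)
    (Ai Aj Ah Ak δij δhk δik δjh : Ω → ℝ)
    (hAi : Measurable Ai) (hAj : Measurable Aj)
    (hAh : Measurable Ah) (hAk : Measurable Ak)
    (hδij : Measurable δij) (hδhk : Measurable δhk)
    (hδik : Measurable δik) (hδjh : Measurable δjh)
    (Yij Yhk Yik Yjh : Ω → ℝ)
    (hYij : Yij = fun ω => if Ai ω + Aj ω + εij ω ≤ δij ω then (1 : ℝ) else 0)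
    (hYhk : Yhk = fun ω => if Ah ω + Ak ω + εhk ω ≤ δhk ω then (1 : ℝ) else 0)
    (hYik : Yik = fun ω => if Ai ω + Ak ω + εik ω ≤ δik ω then (1 : ℝ) else 0)
    (hYjh : Yjh = fun ω => if Aj ω + Ah ω + εjh ω ≤ δjh ω then (1 : ℝ) else 0)
    (c : ℝ) :
    ∀ᵐ ω ∂P,
      (P[fun ω => (1 - Yij ω) * (1 - Yhk ω) * Yik ω * Yjh ω *
            (if c < δij ω + δhk ω - δik ω - δjh ω then (1 : ℝ) else 0)
          | MeasurableSpace.comap Z inferInstance]) ω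
        ≤ 1 - (P {ω | εij ω + εhk ω - εik ω - εjh ω ≤ c}).toReal := by

  classical
  set e : Ω → ℝ := fun ω => εij ω + εhk ω - εik ω - εjh ω with he
  have hemeas : Measurable e := ((hεij.add hεhk).sub hεik).sub hεjh
  set g : Ω → ℝ := fun ω => if c < e ω then (1 : ℝ) else 0 with hg
  set F : Ω → ℝ := fun ω => (1 - Yij ω) * (1 - Yhk ω) * Yik ω * Yjh ω *
      (if c < δij ω + δhk ω - δik ω - δjh ω then (1 : ℝ) else 0) with hF
  -- pointwise bound F ≤ g
  have hFg : F ≤ g := by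
    intro ω
    simp only [hF, hg, hYij, hYhk, hYik, hYjh, he]
    split_ifs <;> norm_num <;> linarith
  -- integrability
  have hsmeas : MeasurableSet {ω | c < e ω} := measurableSet_lt measurable_const hemeas
  have hgind : g = Set.indicator {ω | c < e ω} (fun _ => (1 : ℝ)) := by
    funext ω; simp [Set.indicator_apply, hg]
  have hgint : Integrable g P := by
    rw [hgind]; exact (integrable_const (1 : ℝ)).indicator hsmeas
  have hQ : ∀ ω, F ω = if (¬ (Ai ω + Aj ω + εij ω ≤ δij ω) ∧ ¬ (Ah ω + Ak ω + εhk ω ≤ δhk ω)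
      ∧ (Ai ω + Ak ω + εik ω ≤ δik ω) ∧ (Aj ω + Ah ω + εjh ω ≤ δjh ω)
      ∧ c < δij ω + δhk ω - δik ω - δjh ω) then (1 : ℝ) else 0 := by
    intro ω
    simp only [hF, hYij, hYhk, hYik, hYjh]
    split_ifs <;> norm_num <;> tauto
  have hQmeas : MeasurableSet {ω | ¬ (Ai ω + Aj ω + εij ω ≤ δij ω) ∧ ¬ (Ah ω + Ak ω + εhk ω ≤ δhk ω)
      ∧ (Ai ω + Ak ω + εik ω ≤ δik ω) ∧ (Aj ω + Ah ω + εjh ω ≤ δjh ω)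
      ∧ c < δij ω + δhk ω - δik ω - δjh ω} := by
    refine MeasurableSet.inter ?_ (MeasurableSet.inter ?_ (MeasurableSet.inter ?_
      (MeasurableSet.inter ?_ ?_)))
    · exact (measurableSet_le ((hAi.add hAj).add hεij) hδij).compl
    · exact (measurableSet_le ((hAh.add hAk).add hεhk) hδhk).compl
    · exact measurableSet_le ((hAi.add hAk).add hεik) hδik
    · exact measurableSet_le ((hAj.add hAh).add hεjh) hδjh
    · exact measurableSet_lt measurable_const
        (((hδij.add hδhk).sub hδik).sub hδjh)
  have hFint : Integrable F P := by
    have : F = Set.indicator {ω | ¬ (Ai ω + Aj ω + εij ω ≤ δij ω) ∧ ¬ (Ah ω + Ak ω + εhk ω ≤ δhk ω)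
        ∧ (Ai ω + Ak ω + εik ω ≤ δik ω) ∧ (Aj ω + Ah ω + εjh ω ≤ δjh ω)
        ∧ c < δij ω + δhk ω - δik ω - δjh ω} (fun _ => (1 : ℝ)) := by
      funext ω; rw [hQ ω]; simp [Set.indicator_apply]
    rw [this]; exact (integrable_const (1 : ℝ)).indicator hQmeas
  -- condexp mono
  have hmono : P[F | MeasurableSpace.comap Z inferInstance] ≤ᵐ[P] P[g | MeasurableSpace.comap Z inferInstance] :=
    condExp_mono hFint hgint (Filter.Eventually.of_forall hFg)
  -- condexp of g is constant by independence
  have hle₂ : MeasurableSpace.comap Z inferInstance ≤ ‹MeasurableSpace Ω› := hZ.comap_le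
  set φ : Ω → ℝ × ℝ × ℝ × ℝ := fun ω => (εij ω, εhk ω, εik ω, εjh ω) with hφ
  have hφmeas : Measurable φ := hεij.prodMk (hεhk.prodMk (hεik.prodMk hεjh))
  have hle₁ : MeasurableSpace.comap φ inferInstance ≤ ‹MeasurableSpace Ω› := hφmeas.comap_le
  have hindep' : Indep (MeasurableSpace.comap φ inferInstance) (MeasurableSpace.comap Z inferInstance) P :=
    (IndepFun_iff_Indep _ _ _).mp hindep
  have hgsm : StronglyMeasurable[MeasurableSpace.comap φ inferInstance] g := by
    have : Measurable[MeasurableSpace.comap φ inferInstance] g := by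
      have hφm : Measurable[MeasurableSpace.comap φ inferInstance] φ :=
        Measurable.of_comap_le le_rfl
      have hG : Measurable (fun p : ℝ × ℝ × ℝ × ℝ =>
          if c < p.1 + p.2.1 - p.2.2.1 - p.2.2.2 then (1 : ℝ) else 0) := by
        refine Measurable.ite ?_ measurable_const measurable_const
        exact measurableSet_lt measurable_const
          (((measurable_fst.add (measurable_fst.comp measurable_snd)).sub
            (measurable_fst.comp (measurable_snd.comp measurable_snd))).sub
            (measurable_snd.comp (measurable_snd.comp measurable_snd)))
      exact hG.comp hφm
    exact this.stronglyMeasurable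
  have hconst : P[g | MeasurableSpace.comap Z inferInstance] =ᵐ[P] fun _ => ∫ ω, g ω ∂P :=
    condExp_indep_eq hle₁ hle₂ hgsm hindep'
  -- compute the integral
  have hint : ∫ ω, g ω ∂P = 1 - (P {ω | e ω ≤ c}).toReal := by
    rw [hgind, integral_indicator_const _ hsmeas, measureReal_def]
    have hcompl : {ω | c < e ω} = {ω | e ω ≤ c}ᶜ := by
      ext ω; simp [not_le]
    rw [hcompl, measure_compl (measurableSet_le hemeas measurable_const) (measure_ne_top _ _),
      measure_univ, ENNReal.toReal_sub_of_le prob_le_one ENNReal.one_ne_top,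
      ENNReal.toReal_one]
    simp
  -- combine
  filter_upwards [hmono, hconst] with ω h1 h2
  calc (P[F | MeasurableSpace.comap Z inferInstance]) ω ≤ (P[g | MeasurableSpace.comap Z inferInstance]) ω := h1
    _ = ∫ ω, g ω ∂P := h2
    _ = 1 - (P {ω | e ω ≤ c}).toReal := hint
end

section
/- Let (Ω, F, P) be a probability space, let Z be a random variable taking values in a measurable space, and let ε_{ij}, ε_{hk}, ε_{ik}, ε_{jh} be real random variables such that the random vector (ε_{ij}, ε_{hk}, ε_{ik}, ε_{jh}) is independent of σ(Z). Let A_i, A_j, A_h, A_k and δ_{ij}, δ_{hk}, δ_{ik}, δ_{jh} be arbitrary real random variables, and define Y_{ab} := 1{A_a + A_b + ε_{ab} ≤ δ_{ab}} and Δδ := δ_{ij} + δ_{hk} − δ_{ik} − δ_{jh}. Then for every c ∈ ℝ and any two events G, G' ∈ σ(Z) with P(G) > 0 and P(G') > 0: P( Y_{ij} = Y_{hk} = 1, Y_{ik} = Y_{jh} = 0, Δδ ≤ c | G ) ≤ 1 − P( Y_{ij} = Y_{hk} = 0, Y_{ik} = Y_{jh} = 1, Δδ > c | G' ). -/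
open MeasureTheory ProbabilityTheory

/-- Tetrad restriction with nonparametric shock distribution (Theorem 1):
for any two positive-probability events `G, G'` in `σ(Z)`, the conditional
probability of the tetrad event intersected with `{Δδ ≤ c}` given `G` is
bounded by one minus the conditional probability of the flipped tetrad event
intersected with `{Δδ > c}` given `G'`. -/
theorem tetrad_nonparametric_sandwich
    {Ω : Type*} [MeasurableSpace Ω] (P : Measure Ω) [IsProbabilityMeasure P]
    {β : Type*} [MeasurableSpace β] (Z : Ω → β) (hZ : Measurable Z)
    (εij εhk εik εjh : Ω → ℝ)
    (hεij : Measurable εij) (hεhk : Measurable εhk)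
    (hεik : Measurable εik) (hεjh : Measurable εjh)
    (hindep : IndepFun (fun ω => (εij ω, εhk ω, εik ω, εjh ω)) Z P)
    (Ai Aj Ah Ak δij δhk δik δjh : Ω → ℝ)
    (hAi : Measurable Ai) (hAj : Measurable Aj)
    (hAh : Measurable Ah) (hAk : Measurable Ak)
    (hδij : Measurable δij) (hδhk : Measurable δhk)
    (hδik : Measurable δik) (hδjh : Measurable δjh)
    (Yij Yhk Yik Yjh : Ω → ℝ)
    (hYij : Yij = fun ω => if Ai ω + Aj ω + εij ω ≤ δij ω then (1 : ℝ) else 0)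
    (hYhk : Yhk = fun ω => if Ah ω + Ak ω + εhk ω ≤ δhk ω then (1 : ℝ) else 0)
    (hYik : Yik = fun ω => if Ai ω + Ak ω + εik ω ≤ δik ω then (1 : ℝ) else 0)
    (hYjh : Yjh = fun ω => if Aj ω + Ah ω + εjh ω ≤ δjh ω then (1 : ℝ) else 0)
    (c : ℝ) (G G' : Set Ω)
    (hG : MeasurableSet[MeasurableSpace.comap Z inferInstance] G)
    (hG' : MeasurableSet[MeasurableSpace.comap Z inferInstance] G')
    (hGpos : 0 < P G) (hG'pos : 0 < P G') :
    P[{ω | Yij ω = 1 ∧ Yhk ω = 1 ∧ Yik ω = 0 ∧ Yjh ω = 0 ∧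
          δij ω + δhk ω - δik ω - δjh ω ≤ c} | G]
      ≤ 1 - P[{ω | Yij ω = 0 ∧ Yhk ω = 0 ∧ Yik ω = 1 ∧ Yjh ω = 1 ∧
          c < δij ω + δhk ω - δik ω - δjh ω} | G'] := by
  classical
  set X : Ω → ℝ × ℝ × ℝ × ℝ := fun ω => (εij ω, εhk ω, εik ω, εjh ω) with hX
  have hXm : Measurable X := by
    apply Measurable.prod hεij (Measurable.prod hεhk (Measurable.prod hεik hεjh))
  set s : Set (ℝ × ℝ × ℝ × ℝ) := {p | p.1 + p.2.1 - p.2.2.1 - p.2.2.2 ≤ c} with hs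
  have hsm : MeasurableSet s := by
    apply measurableSet_le _ measurable_const
    fun_prop
  set E : Set Ω := X ⁻¹' s with hE
  -- key: conditional probability of X-measurable events equals unconditional
  have key : ∀ (H : Set Ω),
      MeasurableSet[MeasurableSpace.comap Z inferInstance] H → 0 < P H →
      ∀ (u : Set (ℝ × ℝ × ℝ × ℝ)), MeasurableSet u → P[X ⁻¹' u | H] = P (X ⁻¹' u) := by
    intro H hH hHpos u hu
    obtain ⟨t, ht, rfl⟩ := hH
    have hHm : MeasurableSet (Z ⁻¹' t) := hZ ht
    have hmul : P (X ⁻¹' u ∩ Z ⁻¹' t) = P (X ⁻¹' u) * P (Z ⁻¹' t) :=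
      (ProbabilityTheory.indepFun_iff_measure_inter_preimage_eq_mul.mp hindep) u t hu ht
    rw [ProbabilityTheory.cond_apply hHm, Set.inter_comm, hmul]
    rw [mul_comm (P (X ⁻¹' u)), ← mul_assoc, ENNReal.inv_mul_cancel hHpos.ne' (measure_ne_top P _), one_mul]
  have hcondE : P[E | G] = P E := key G hG hGpos s hsm
  have hcondEc : P[Eᶜ | G'] = P Eᶜ := by
    have := key G' hG' hG'pos sᶜ hsm.compl
    simpa [hE, Set.preimage_compl] using this
  -- subset 1
  have hsub1 : {ω | Yij ω = 1 ∧ Yhk ω = 1 ∧ Yik ω = 0 ∧ Yjh ω = 0 ∧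
      δij ω + δhk ω - δik ω - δjh ω ≤ c} ⊆ E := by
    intro ω ⟨h1, h2, h3, h4, h5⟩
    rw [hYij] at h1; rw [hYhk] at h2; rw [hYik] at h3; rw [hYjh] at h4
    simp only at h1 h2 h3 h4
    split_ifs at h1 with hc1 <;> try norm_num at h1
    split_ifs at h2 with hc2 <;> try norm_num at h2
    split_ifs at h3 with hc3 <;> try norm_num at h3
    split_ifs at h4 with hc4 <;> try norm_num at h4
    simp only [hE, hs, hX, Set.mem_preimage, Set.mem_setOf_eq]
    push_neg at hc3 hc4
    linarith
  -- subset 2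
  have hsub2 : {ω | Yij ω = 0 ∧ Yhk ω = 0 ∧ Yik ω = 1 ∧ Yjh ω = 1 ∧
      c < δij ω + δhk ω - δik ω - δjh ω} ⊆ Eᶜ := by
    intro ω ⟨h1, h2, h3, h4, h5⟩
    rw [hYij] at h1; rw [hYhk] at h2; rw [hYik] at h3; rw [hYjh] at h4
    simp only at h1 h2 h3 h4
    split_ifs at h1 with hc1 <;> try norm_num at h1
    split_ifs at h2 with hc2 <;> try norm_num at h2
    split_ifs at h3 with hc3 <;> try norm_num at h3
    split_ifs at h4 with hc4 <;> try norm_num at h4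
    simp only [hE, hs, hX, Set.mem_compl_iff, Set.mem_preimage, Set.mem_setOf_eq, not_le]
    push_neg at hc1 hc2
    linarith
  have h1 : P[{ω | Yij ω = 1 ∧ Yhk ω = 1 ∧ Yik ω = 0 ∧ Yjh ω = 0 ∧
      δij ω + δhk ω - δik ω - δjh ω ≤ c} | G] ≤ P E := by
    rw [← hcondE]; exact measure_mono hsub1
  have h2 : P[{ω | Yij ω = 0 ∧ Yhk ω = 0 ∧ Yik ω = 1 ∧ Yjh ω = 1 ∧
      c < δij ω + δhk ω - δik ω - δjh ω} | G'] ≤ P Eᶜ := by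
    rw [← hcondEc]; exact measure_mono hsub2
  have hEm : MeasurableSet E := hXm hsm
  have hPE : P E = 1 - P Eᶜ := by
    rw [prob_compl_eq_one_sub hEm,
      ENNReal.sub_sub_cancel ENNReal.one_ne_top prob_le_one]
  calc P[{ω | Yij ω = 1 ∧ Yhk ω = 1 ∧ Yik ω = 0 ∧ Yjh ω = 0 ∧
      δij ω + δhk ω - δik ω - δjh ω ≤ c} | G] ≤ P E := h1
    _ = 1 - P Eᶜ := hPE
    _ ≤ 1 - P[{ω | Yij ω = 0 ∧ Yhk ω = 0 ∧ Yik ω = 1 ∧ Yjh ω = 1 ∧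
          c < δij ω + δhk ω - δik ω - δjh ω} | G'] := tsub_le_tsub_left h2 1
end

section
/- Let (Ω, F, P) be a probability space, let Z be a random variable taking values in a measurable space, and let ε_{ij}, ε_{hk}, ε_{ik}, ε_{jh} be real random variables such that the random vector (ε_{ij}, ε_{hk}, ε_{ik}, ε_{jh}) is independent of σ(Z). Let A_i, A_j, A_h, A_k and δ_{ij}, δ_{hk}, δ_{ik}, δ_{jh} be arbitrary real random variables, define Y_{ab} := 1{A_a + A_b + ε_{ab} ≤ δ_{ab}}, Δδ := δ_{ij} + δ_{hk} − δ_{ik} − δ_{jh}, and F_Δ(c) := P(ε_{ij} + ε_{hk} − ε_{ik} − ε_{jh} ≤ c). Then for every c ∈ ℝ and every event G ∈ σ(Z) with P(G) > 0: P( Y_{ij} = Y_{hk} = 1, Y_{ik} = Y_{jh} = 0, Δδ ≤ c | G ) ≤ F_Δ(c) and F_Δ(c) ≤ 1 − P( Y_{ij} = Y_{hk} = 0, Y_{ik} = Y_{jh} = 1, Δδ > c | G ). -/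
open MeasureTheory ProbabilityTheory

lemma cond_le_of_subset_indep
    {Ω : Type*} [MeasurableSpace Ω] (P : Measure Ω) [IsProbabilityMeasure P]
    {S T G : Set Ω} (hS : S ⊆ T) (hGm : MeasurableSet G)
    (hmul : P (T ∩ G) = P T * P G) (hGpos : 0 < P G) :
    P[S | G] ≤ P T := by
  rw [cond_apply hGm]
  calc (P G)⁻¹ * P (G ∩ S) ≤ (P G)⁻¹ * P (G ∩ T) :=
        mul_le_mul_right (measure_mono (Set.inter_subset_inter_right _ hS)) _
    _ = (P G)⁻¹ * (P T * P G) := by rw [Set.inter_comm, hmul]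
    _ = P T := by
        rw [mul_comm (P T), ← mul_assoc,
          ENNReal.inv_mul_cancel hGpos.ne' (measure_ne_top P G), one_mul]

/-- Tetrad restriction with parametric shock distribution (Theorem 2):
when the CDF `F_Δ(c) = P(Δε ≤ c)` of the differenced shock is known, both
one-sided bounds hold: for any positive-probability event `G` in `σ(Z)`,
the conditional probability of the tetrad event with `{Δδ ≤ c}` is below
`F_Δ(c)`, and `F_Δ(c)` is below one minus the conditional probability of the
flipped event with `{Δδ > c}`. -/
theorem tetrad_parametric_bounds
    {Ω : Type*} [MeasurableSpace Ω] (P : Measure Ω) [IsProbabilityMeasure P]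
    {β : Type*} [MeasurableSpace β] (Z : Ω → β) (hZ : Measurable Z)
    (εij εhk εik εjh : Ω → ℝ)
    (hεij : Measurable εij) (hεhk : Measurable εhk)
    (hεik : Measurable εik) (hεjh : Measurable εjh)
    (hindep : IndepFun (fun ω => (εij ω, εhk ω, εik ω, εjh ω)) Z P)
    (Ai Aj Ah Ak δij δhk δik δjh : Ω → ℝ)
    (hAi : Measurable Ai) (hAj : Measurable Aj)
    (hAh : Measurable Ah) (hAk : Measurable Ak)
    (hδij : Measurable δij) (hδhk : Measurable δhk)
    (hδik : Measurable δik) (hδjh : Measurable δjh)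
    (Yij Yhk Yik Yjh : Ω → ℝ)
    (hYij : Yij = fun ω => if Ai ω + Aj ω + εij ω ≤ δij ω then (1 : ℝ) else 0)
    (hYhk : Yhk = fun ω => if Ah ω + Ak ω + εhk ω ≤ δhk ω then (1 : ℝ) else 0)
    (hYik : Yik = fun ω => if Ai ω + Ak ω + εik ω ≤ δik ω then (1 : ℝ) else 0)
    (hYjh : Yjh = fun ω => if Aj ω + Ah ω + εjh ω ≤ δjh ω then (1 : ℝ) else 0)
    (c : ℝ) (G : Set Ω)
    (hG : MeasurableSet[MeasurableSpace.comap Z inferInstance] G)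
    (hGpos : 0 < P G) :
    P[{ω | Yij ω = 1 ∧ Yhk ω = 1 ∧ Yik ω = 0 ∧ Yjh ω = 0 ∧
          δij ω + δhk ω - δik ω - δjh ω ≤ c} | G]
        ≤ P {ω | εij ω + εhk ω - εik ω - εjh ω ≤ c} ∧
    P {ω | εij ω + εhk ω - εik ω - εjh ω ≤ c}
        ≤ 1 - P[{ω | Yij ω = 0 ∧ Yhk ω = 0 ∧ Yik ω = 1 ∧ Yjh ω = 1 ∧
              c < δij ω + δhk ω - δik ω - δjh ω} | G] := by

  obtain ⟨B, hB, rfl⟩ := hG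
  have hGm : MeasurableSet (Z ⁻¹' B) := hZ hB
  set vec : Ω → ℝ × ℝ × ℝ × ℝ := fun ω => (εij ω, εhk ω, εik ω, εjh ω) with hvec
  have hvecm : Measurable vec := by
    exact (hεij.prodMk (hεhk.prodMk (hεik.prodMk hεjh)))
  have hM : MeasurableSet {p : ℝ × ℝ × ℝ × ℝ | p.1 + p.2.1 - p.2.2.1 - p.2.2.2 ≤ c} := by
    apply measurableSet_le _ measurable_const
    fun_prop
  set T : Set Ω := {ω | εij ω + εhk ω - εik ω - εjh ω ≤ c} with hT
  have hTpre : T = vec ⁻¹' {p : ℝ × ℝ × ℝ × ℝ | p.1 + p.2.1 - p.2.2.1 - p.2.2.2 ≤ c} := rfl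
  have hTm : MeasurableSet T := hTpre ▸ hvecm hM
  have hmul : P (T ∩ Z ⁻¹' B) = P T * P (Z ⁻¹' B) := by
    rw [hTpre]
    exact hindep.measure_inter_preimage_eq_mul _ _ hM hB
  have hmulc : P (Tᶜ ∩ Z ⁻¹' B) = P Tᶜ * P (Z ⁻¹' B) := by
    rw [hTpre, ← Set.preimage_compl]
    exact hindep.measure_inter_preimage_eq_mul _ _ hM.compl hB
  have hsub1 : {ω | Yij ω = 1 ∧ Yhk ω = 1 ∧ Yik ω = 0 ∧ Yjh ω = 0 ∧
      δij ω + δhk ω - δik ω - δjh ω ≤ c} ⊆ T := by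
    rintro ω ⟨h1, h2, h3, h4, h5⟩
    have e1 : Ai ω + Aj ω + εij ω ≤ δij ω := by
      by_contra h; simp [hYij, h] at h1
    have e2 : Ah ω + Ak ω + εhk ω ≤ δhk ω := by
      by_contra h; simp [hYhk, h] at h2
    have e3 : ¬ (Ai ω + Ak ω + εik ω ≤ δik ω) := by
      intro h; simp [hYik, h] at h3
    have e4 : ¬ (Aj ω + Ah ω + εjh ω ≤ δjh ω) := by
      intro h; simp [hYjh, h] at h4
    simp only [hT, Set.mem_setOf_eq]
    push_neg at e3 e4
    linarith
  have hsub2 : {ω | Yij ω = 0 ∧ Yhk ω = 0 ∧ Yik ω = 1 ∧ Yjh ω = 1 ∧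
      c < δij ω + δhk ω - δik ω - δjh ω} ⊆ Tᶜ := by
    rintro ω ⟨h1, h2, h3, h4, h5⟩
    have e1 : ¬ (Ai ω + Aj ω + εij ω ≤ δij ω) := by
      intro h; simp [hYij, h] at h1
    have e2 : ¬ (Ah ω + Ak ω + εhk ω ≤ δhk ω) := by
      intro h; simp [hYhk, h] at h2
    have e3 : Ai ω + Ak ω + εik ω ≤ δik ω := by
      by_contra h; simp [hYik, h] at h3
    have e4 : Aj ω + Ah ω + εjh ω ≤ δjh ω := by
      by_contra h; simp [hYjh, h] at h4
    simp only [hT, Set.mem_compl_iff, Set.mem_setOf_eq, not_le]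
    push_neg at e1 e2
    linarith
  have b1 := cond_le_of_subset_indep P hsub1 hGm hmul hGpos
  have b2 := cond_le_of_subset_indep P hsub2 hGm hmulc hGpos
  refine ⟨b1, ?_⟩
  have hcompl : P Tᶜ + P T = 1 := by
    rw [add_comm, ← measure_union (disjoint_compl_right) hTm.compl, Set.union_compl_self,
      measure_univ]
  refine ENNReal.le_sub_of_add_le_left (measure_ne_top _ _) ?_
  calc P[{ω | Yij ω = 0 ∧ Yhk ω = 0 ∧ Yik ω = 1 ∧ Yjh ω = 1 ∧
        c < δij ω + δhk ω - δik ω - δjh ω} | Z ⁻¹' B] + P T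
      ≤ P Tᶜ + P T := add_le_add b2 le_rfl
    _ = 1 := hcompl
end

section
/- Let (Ω, F, P) be a probability space. Let (Z_i, A_i), (Z_j, A_j), (Z_k, A_k) be independent and identically distributed random pairs, where each Z takes values in a countable measurable space and each A is real-valued. Let ε_{ij}, ε_{ik}, ε_{jk} be real random variables such that (ε_{ij}, ε_{ik}, ε_{jk}) is independent of ((Z_i, A_i), (Z_j, A_j), (Z_k, A_k)). Let δ_{ij}, δ_{ik}, δ_{jk} be arbitrary real random variables, define Y_{ab} := 1{A_a + A_b + ε_{ab} ≤ δ_{ab}} and u := 2A_i + ε_{ij} + ε_{ik} − ε_{jk}. Then for every c ∈ ℝ and all values z_i, z_j, z_k with P(Z_i = z_i, Z_j = z_j, Z_k = z_k) > 0: (i) P(u ≤ c | Z_i = z_i, Z_j = z_j, Z_k = z_k) = P(u ≤ c | Z_i = z_i) =: G_3(c | z_i); (ii) P( Y_{ij} Y_{ik} (1 − Y_{jk}) = 1 and δ_{ij} + δ_{ik} − δ_{jk} ≤ c | Z_i = z_i, Z_j = z_j, Z_k = z_k ) ≤ G_3(c | z_i); and (iii) P( (1 − Y_{ij})(1 − Y_{ik})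 Y_{jk} = 1 and δ_{ij} + δ_{ik} − δ_{jk} > c | Z_i = z_i, Z_j = z_j, Z_k = z_k ) ≤ 1 − G_3(c | z_i). -/
open MeasureTheory ProbabilityTheory

/-- Grouping lemma: if `X` is independent of the pair `(Y, Z)` and `Y` is independent
of `Z`, then the pair `(X, Y)` is independent of `Z`. -/
lemma aux_group_indep {Ω α γ₁ γ₂ : Type*} [MeasurableSpace Ω] [MeasurableSpace α]
    [MeasurableSpace γ₁] [MeasurableSpace γ₂]
    (P : Measure Ω) [IsProbabilityMeasure P]
    {X : Ω → α} {Y : Ω → γ₁} {Z : Ω → γ₂}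
    (hX : Measurable X) (hY : Measurable Y) (hZ : Measurable Z)
    (h1 : IndepFun X (fun ω => (Y ω, Z ω)) P)
    (h2 : IndepFun Y Z P) :
    IndepFun (fun ω => (X ω, Y ω)) Z P := by
  haveI : IsProbabilityMeasure (P.map X) := Measure.isProbabilityMeasure_map hX.aemeasurable
  haveI : IsProbabilityMeasure (P.map Y) := Measure.isProbabilityMeasure_map hY.aemeasurable
  haveI : IsProbabilityMeasure (P.map Z) := Measure.isProbabilityMeasure_map hZ.aemeasurable
  have hXY : IndepFun X Y P := h1.comp measurable_id measurable_fst
  rw [indepFun_iff_map_prod_eq_prod_map_map (hX.prodMk hY).aemeasurable hZ.aemeasurable]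
  rw [indepFun_iff_map_prod_eq_prod_map_map hX.aemeasurable
    (hY.prodMk hZ).aemeasurable] at h1
  rw [indepFun_iff_map_prod_eq_prod_map_map hY.aemeasurable hZ.aemeasurable] at h2
  rw [indepFun_iff_map_prod_eq_prod_map_map hX.aemeasurable hY.aemeasurable] at hXY
  have hmap : P.map (fun ω => ((X ω, Y ω), Z ω))
      = Measure.map (MeasurableEquiv.prodAssoc (α := α) (β := γ₁) (γ := γ₂)).symm
        (P.map (fun ω => (X ω, (Y ω, Z ω)))) := by
    rw [Measure.map_map MeasurableEquiv.prodAssoc.symm.measurable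
      (hX.prodMk (hY.prodMk hZ))]
    rfl
  rw [hmap, h1, h2, hXY, ← Measure.prodAssoc_prod, MeasurableEquiv.map_symm_map]

/-- Three-link triad bounds (Proposition): with `(Z_i,A_i),(Z_j,A_j),(Z_k,A_k)`
i.i.d. and the shocks independent of them, (i) the conditional CDF of
`u = 2A_i + ε_ij + ε_ik − ε_jk` given `(Z_i,Z_j,Z_k) = (z_i,z_j,z_k)` depends
only on `z_i`, (ii) the conditional probability of the triad event with
`{Δδ ≤ c}` is below `G₃(c|z_i)`, and (iii) that of the flipped event with
`{Δδ > c}` is below `1 − G₃(c|z_i)`. -/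
theorem triad_three_link_conditional_bounds
    {Ω : Type*} [MeasurableSpace Ω] (P : Measure Ω) [IsProbabilityMeasure P]
    {β : Type*} [MeasurableSpace β] [Countable β] [MeasurableSingletonClass β]
    (Zi Zj Zk : Ω → β) (Ai Aj Ak : Ω → ℝ)
    (hZi : Measurable Zi) (hZj : Measurable Zj) (hZk : Measurable Zk)
    (hAi : Measurable Ai) (hAj : Measurable Aj) (hAk : Measurable Ak)
    (hindep_pairs : iIndepFun
      ![fun ω => (Zi ω, Ai ω), fun ω => (Zj ω, Aj ω), fun ω => (Zk ω, Ak ω)] P)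
    (hident_ij : IdentDistrib (fun ω => (Zi ω, Ai ω)) (fun ω => (Zj ω, Aj ω)) P P)
    (hident_ik : IdentDistrib (fun ω => (Zi ω, Ai ω)) (fun ω => (Zk ω, Ak ω)) P P)
    (εij εik εjk : Ω → ℝ)
    (hεij : Measurable εij) (hεik : Measurable εik) (hεjk : Measurable εjk)
    (hindep_shocks : IndepFun (fun ω => (εij ω, εik ω, εjk ω))
      (fun ω => ((Zi ω, Ai ω), (Zj ω, Aj ω), (Zk ω, Ak ω))) P)
    (δij δik δjk : Ω → ℝ)
    (hδij : Measurable δij) (hδik : Measurable δik) (hδjk : Measurable δjk)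
    (Yij Yik Yjk : Ω → ℝ)
    (hYij : Yij = fun ω => if Ai ω + Aj ω + εij ω ≤ δij ω then (1 : ℝ) else 0)
    (hYik : Yik = fun ω => if Ai ω + Ak ω + εik ω ≤ δik ω then (1 : ℝ) else 0)
    (hYjk : Yjk = fun ω => if Aj ω + Ak ω + εjk ω ≤ δjk ω then (1 : ℝ) else 0)
    (u : Ω → ℝ) (hu : u = fun ω => 2 * Ai ω + εij ω + εik ω - εjk ω)
    (c : ℝ) (zi zj zk : β)
    (hpos : 0 < P {ω | Zi ω = zi ∧ Zj ω = zj ∧ Zk ω = zk}) :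
    P[{ω | u ω ≤ c} | {ω | Zi ω = zi ∧ Zj ω = zj ∧ Zk ω = zk}]
        = P[{ω | u ω ≤ c} | {ω | Zi ω = zi}] ∧
    P[{ω | Yij ω * Yik ω * (1 - Yjk ω) = 1 ∧ δij ω + δik ω - δjk ω ≤ c}
        | {ω | Zi ω = zi ∧ Zj ω = zj ∧ Zk ω = zk}]
        ≤ P[{ω | u ω ≤ c} | {ω | Zi ω = zi}] ∧
    P[{ω | (1 - Yij ω) * (1 - Yik ω) * Yjk ω = 1 ∧ c < δij ω + δik ω - δjk ω}
        | {ω | Zi ω = zi ∧ Zj ω = zj ∧ Zk ω = zk}]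
        ≤ 1 - P[{ω | u ω ≤ c} | {ω | Zi ω = zi}] := by
  -- measurable pairs
  set pi : Ω → β × ℝ := fun ω => (Zi ω, Ai ω) with hpi_def
  set pj : Ω → β × ℝ := fun ω => (Zj ω, Aj ω) with hpj_def
  set pk : Ω → β × ℝ := fun ω => (Zk ω, Ak ω) with hpk_def
  have hpi : Measurable pi := hZi.prodMk hAi
  have hpj : Measurable pj := hZj.prodMk hAj
  have hpk : Measurable pk := hZk.prodMk hAk
  have hε3 : Measurable (fun ω => (εij ω, εik ω, εjk ω)) :=
    hεij.prodMk (hεik.prodMk hεjk)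
  have hfam : ∀ i, Measurable (![pi, pj, pk] i) := by
    intro i
    fin_cases i
    · exact hpi
    · exact hpj
    · exact hpk
  -- independence of pair i from (pair j, pair k)
  have h23 : IndepFun (fun ω => (pj ω, pk ω)) pi P := by
    have := hindep_pairs.indepFun_prodMk hfam 1 2 0 (by decide) (by decide)
    exact this
  have hpi_jk : IndepFun pi (fun ω => (pj ω, pk ω)) P := h23.symm
  -- independence of pair j from pair k
  have hjk : IndepFun pj pk P := hindep_pairs.indepFun (i := 1) (j := 2) (by decide)
  -- the big grouping: (ε, pair i) independent of (pair j, pair k)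
  have hbig : IndepFun (fun ω => ((εij ω, εik ω, εjk ω), pi ω))
      (fun ω => (pj ω, pk ω)) P :=
    aux_group_indep P hε3 hpi (hpj.prodMk hpk) hindep_shocks hpi_jk
  -- project: (u, Zi) independent of (Zj, Zk)
  have hφ : Measurable (fun p : (ℝ × ℝ × ℝ) × (β × ℝ) =>
      (2 * p.2.2 + p.1.1 + p.1.2.1 - p.1.2.2, p.2.1)) := by
    apply Measurable.prodMk
    · exact (((measurable_snd.snd.const_mul 2).add measurable_fst.fst).add
        measurable_fst.snd.fst).sub measurable_fst.snd.snd
    · exact measurable_snd.fst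
  have hψ : Measurable (fun q : (β × ℝ) × (β × ℝ) => (q.1.1, q.2.1)) :=
    measurable_fst.fst.prodMk measurable_snd.fst
  have huZ : IndepFun (fun ω => (u ω, Zi ω)) (fun ω => (Zj ω, Zk ω)) P := by
    have := hbig.comp hφ hψ
    subst hu
    exact this
  have hZi_jk : IndepFun Zi (fun ω => (Zj ω, Zk ω)) P :=
    hpi_jk.comp measurable_fst hψ
  -- measurability of the events
  have hum : Measurable u := by
    subst hu
    exact (((hAi.const_mul 2).add hεij).add hεik).sub hεjk
  have hUset : MeasurableSet {ω | u ω ≤ c} := hum measurableSet_Iic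
  have hS : MeasurableSet {ω | Zi ω = zi} := hZi (measurableSet_singleton zi)
  have hstk : MeasurableSet {ω | Zi ω = zi ∧ Zj ω = zj ∧ Zk ω = zk} := by
    have : {ω | Zi ω = zi ∧ Zj ω = zj ∧ Zk ω = zk}
        = {ω | Zi ω = zi} ∩ ({ω | Zj ω = zj} ∩ {ω | Zk ω = zk}) := by
      ext ω; simp [Set.mem_setOf_eq, and_assoc]
    rw [this]
    exact hS.inter ((hZj (measurableSet_singleton zj)).inter
      (hZk (measurableSet_singleton zk)))
  -- the key factorizations
  have hTK_eq : {ω | Zj ω = zj ∧ Zk ω = zk}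
      = (fun ω => (Zj ω, Zk ω)) ⁻¹' {(zj, zk)} := by
    ext ω; simp [Prod.ext_iff]
  have hA : P ({ω | u ω ≤ c ∧ Zi ω = zi} ∩ {ω | Zj ω = zj ∧ Zk ω = zk})
      = P {ω | u ω ≤ c ∧ Zi ω = zi} * P {ω | Zj ω = zj ∧ Zk ω = zk} := by
    have h1 : {ω | u ω ≤ c ∧ Zi ω = zi}
        = (fun ω => (u ω, Zi ω)) ⁻¹' (Set.Iic c ×ˢ {zi}) := by
      ext ω
      simp only [Set.mem_setOf_eq, Set.mem_preimage, Set.mem_prod, Set.mem_Iic,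
        Set.mem_singleton_iff]
    rw [h1, hTK_eq]
    exact huZ.measure_inter_preimage_eq_mul _ _
      (measurableSet_Iic.prod (measurableSet_singleton zi))
      (measurableSet_singleton (zj, zk))
  have hB : P {ω | Zi ω = zi ∧ Zj ω = zj ∧ Zk ω = zk}
      = P {ω | Zi ω = zi} * P {ω | Zj ω = zj ∧ Zk ω = zk} := by
    have h1 : {ω | Zi ω = zi ∧ Zj ω = zj ∧ Zk ω = zk}
        = (Zi ⁻¹' {zi}) ∩ ((fun ω => (Zj ω, Zk ω)) ⁻¹' {(zj, zk)}) := by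
      ext ω; simp [Prod.ext_iff, and_assoc]
    rw [h1, hTK_eq]
    exact hZi_jk.measure_inter_preimage_eq_mul _ _
      (measurableSet_singleton zi) (measurableSet_singleton (zj, zk))
  -- positivity facts
  have hstk_sub_S : {ω | Zi ω = zi ∧ Zj ω = zj ∧ Zk ω = zk} ⊆ {ω | Zi ω = zi} :=
    fun ω hω => hω.1
  have hstk_sub_TK : {ω | Zi ω = zi ∧ Zj ω = zj ∧ Zk ω = zk}
      ⊆ {ω | Zj ω = zj ∧ Zk ω = zk} := fun ω hω => hω.2
  have hS_pos : P {ω | Zi ω = zi} ≠ 0 :=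
    (lt_of_lt_of_le hpos (measure_mono hstk_sub_S)).ne'
  have hTK_pos : P {ω | Zj ω = zj ∧ Zk ω = zk} ≠ 0 :=
    (lt_of_lt_of_le hpos (measure_mono hstk_sub_TK)).ne'
  have hTK_fin : P {ω | Zj ω = zj ∧ Zk ω = zk} ≠ ⊤ := measure_ne_top P _
  -- (i)
  have hmain : P[{ω | u ω ≤ c} | {ω | Zi ω = zi ∧ Zj ω = zj ∧ Zk ω = zk}]
      = P[{ω | u ω ≤ c} | {ω | Zi ω = zi}] := by
    rw [cond_apply hstk, cond_apply hS]
    have hint : {ω | Zi ω = zi ∧ Zj ω = zj ∧ Zk ω = zk} ∩ {ω | u ω ≤ c}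
        = {ω | u ω ≤ c ∧ Zi ω = zi} ∩ {ω | Zj ω = zj ∧ Zk ω = zk} := by
      ext ω; simp [Set.mem_setOf_eq]; tauto
    have hint2 : {ω | Zi ω = zi} ∩ {ω | u ω ≤ c} = {ω | u ω ≤ c ∧ Zi ω = zi} := by
      ext ω; simp [Set.mem_setOf_eq]; tauto
    rw [hint, hint2, hA, hB]
    rw [ENNReal.mul_inv (Or.inl hS_pos) (Or.inr hTK_pos)]
    calc (P {ω | Zi ω = zi})⁻¹ * (P {ω | Zj ω = zj ∧ Zk ω = zk})⁻¹
          * (P {ω | u ω ≤ c ∧ Zi ω = zi} * P {ω | Zj ω = zj ∧ Zk ω = zk})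
        = (P {ω | Zi ω = zi})⁻¹ * P {ω | u ω ≤ c ∧ Zi ω = zi}
          * ((P {ω | Zj ω = zj ∧ Zk ω = zk})⁻¹
            * P {ω | Zj ω = zj ∧ Zk ω = zk}) := by ring
      _ = (P {ω | Zi ω = zi})⁻¹ * P {ω | u ω ≤ c ∧ Zi ω = zi} := by
          rw [ENNReal.inv_mul_cancel hTK_pos hTK_fin, mul_one]
  refine ⟨hmain, ?_, ?_⟩
  -- (ii)
  · have hsub : {ω | Yij ω * Yik ω * (1 - Yjk ω) = 1 ∧ δij ω + δik ω - δjk ω ≤ c}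
        ⊆ {ω | u ω ≤ c} := by
      intro ω hω
      obtain ⟨h1, h2⟩ := hω
      subst hYij hYik hYjk hu
      simp only [Set.mem_setOf_eq]
      by_cases hij : Ai ω + Aj ω + εij ω ≤ δij ω
      · by_cases hik : Ai ω + Ak ω + εik ω ≤ δik ω
        · by_cases hjk' : Aj ω + Ak ω + εjk ω ≤ δjk ω
          · simp [hij, hik, hjk'] at h1
          · push_neg at hjk'
            linarith
        · simp [hik] at h1
      · simp [hij] at h1
    calc P[{ω | Yij ω * Yik ω * (1 - Yjk ω) = 1 ∧ δij ω + δik ω - δjk ω ≤ c}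
          | {ω | Zi ω = zi ∧ Zj ω = zj ∧ Zk ω = zk}]
        ≤ P[{ω | u ω ≤ c} | {ω | Zi ω = zi ∧ Zj ω = zj ∧ Zk ω = zk}] :=
          measure_mono hsub
      _ = P[{ω | u ω ≤ c} | {ω | Zi ω = zi}] := hmain
  -- (iii)
  · have hsub : {ω | (1 - Yij ω) * (1 - Yik ω) * Yjk ω = 1 ∧ c < δij ω + δik ω - δjk ω}
        ⊆ {ω | u ω ≤ c}ᶜ := by
      intro ω hω
      obtain ⟨h1, h2⟩ := hω
      subst hYij hYik hYjk hu
      simp only [Set.mem_compl_iff, Set.mem_setOf_eq, not_le]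
      by_cases hij : Ai ω + Aj ω + εij ω ≤ δij ω
      · simp [hij] at h1
      · by_cases hik : Ai ω + Ak ω + εik ω ≤ δik ω
        · simp [hik] at h1
        · by_cases hjk' : Aj ω + Ak ω + εjk ω ≤ δjk ω
          · push_neg at hij hik
            linarith
          · simp [hjk'] at h1
    haveI : IsProbabilityMeasure
        (P[|{ω | Zi ω = zi ∧ Zj ω = zj ∧ Zk ω = zk}]) :=
      cond_isProbabilityMeasure hpos.ne'
    calc P[{ω | (1 - Yij ω) * (1 - Yik ω) * Yjk ω = 1 ∧ c < δij ω + δik ω - δjk ω}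
          | {ω | Zi ω = zi ∧ Zj ω = zj ∧ Zk ω = zk}]
        ≤ P[{ω | u ω ≤ c}ᶜ | {ω | Zi ω = zi ∧ Zj ω = zj ∧ Zk ω = zk}] :=
          measure_mono hsub
      _ = 1 - P[{ω | u ω ≤ c} | {ω | Zi ω = zi ∧ Zj ω = zj ∧ Zk ω = zk}] :=
          prob_compl_eq_one_sub hUset
      _ = 1 - P[{ω | u ω ≤ c} | {ω | Zi ω = zi}] := by rw [hmain]
end

section
/- Let (Ω, F, P) be a probability space. Let (Z_i, A_i), (Z_j, A_j), (Z_k, A_k) be independent and identically distributed random pairs, where each Z takes values in a countable measurable space and each A is real-valued. Let ε_{ij}, ε_{ik} be real random variables such that (ε_{ij}, ε_{ik}) is independent of ((Z_i, A_i), (Z_j, A_j), (Z_k, A_k)). Let δ_{ij}, δ_{ik} be arbitrary real random variables, define Y_{ab} := 1{A_a + A_b + ε_{ab} ≤ δ_{ab}} and u := A_j − A_k + ε_{ij} − ε_{ik}. Then for every c ∈ ℝ and all values z_i, z_j, z_k with P(Z_i = z_i, Z_j = z_j, Z_k = z_k) > 0: (i) P(u ≤ c | Z_i = z_i, Z_j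 = z_j, Z_k = z_k) = P(u ≤ c | Z_j = z_j, Z_k = z_k) =: G_2(c | z_j, z_k); (ii) P( Y_{ij} (1 − Y_{ik}) = 1 and δ_{ij} − δ_{ik} ≤ c | Z_i = z_i, Z_j = z_j, Z_k = z_k ) ≤ G_2(c | z_j, z_k); and (iii) P( (1 − Y_{ij}) Y_{ik} = 1 and δ_{ij} − δ_{ik} > c | Z_i = z_i, Z_j = z_j, Z_k = z_k ) ≤ 1 − G_2(c | z_j, z_k). -/
set_option maxHeartbeats 1000000


open MeasureTheory ProbabilityTheory

/-- If `E` is independent of the pair `(X, Y)` and `X` is independent of `Y`,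
then the pair `(E, Y)` is independent of `X`. -/
lemma indepFun_pair_left_aux {Ω α β γ : Type*} [MeasurableSpace Ω] [MeasurableSpace α]
    [MeasurableSpace β] [MeasurableSpace γ]
    (P : Measure Ω) [IsProbabilityMeasure P]
    {X : Ω → α} {Y : Ω → β} {E : Ω → γ}
    (hX : Measurable X) (hY : Measurable Y) (hE : Measurable E)
    (h1 : IndepFun E (fun ω => (X ω, Y ω)) P)
    (h2 : IndepFun X Y P) :
    IndepFun (fun ω => (E ω, Y ω)) X P := by
  have hEY : IndepFun E Y P := h1.comp measurable_id measurable_snd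
  rw [indepFun_iff_measure_inter_preimage_eq_mul]
  intro S T hS hT
  have hW : Measurable (fun ω => (E ω, Y ω)) := hE.prodMk hY
  have heq : (P.restrict (X ⁻¹' T)).map (fun ω => (E ω, Y ω))
      = P (X ⁻¹' T) • P.map (fun ω => (E ω, Y ω)) := by
    refine ext_of_generate_finite _ generateFrom_prod.symm isPiSystem_prod ?_ ?_
    · rintro s ⟨S₁, hS₁, S₂, hS₂, rfl⟩
      rw [Measure.map_apply hW (hS₁.prod hS₂), Measure.restrict_apply (hW (hS₁.prod hS₂)),
        Measure.smul_apply, Measure.map_apply hW (hS₁.prod hS₂), Set.mk_preimage_prod]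
      have hset : E ⁻¹' S₁ ∩ Y ⁻¹' S₂ ∩ X ⁻¹' T
          = E ⁻¹' S₁ ∩ ((fun ω => (X ω, Y ω)) ⁻¹' (T ×ˢ S₂)) := by
        rw [Set.mk_preimage_prod]
        ext ω; simp only [Set.mem_inter_iff, Set.mem_preimage]; tauto
      rw [hset, h1.measure_inter_preimage_eq_mul S₁ (T ×ˢ S₂) hS₁ (hT.prod hS₂),
        Set.mk_preimage_prod,
        h2.measure_inter_preimage_eq_mul T S₂ hT hS₂,
        hEY.measure_inter_preimage_eq_mul S₁ S₂ hS₁ hS₂]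
      simp only [Measure.smul_apply, smul_eq_mul]
      ring
    · rw [Measure.map_apply hW MeasurableSet.univ, Measure.smul_apply,
        Measure.map_apply hW MeasurableSet.univ]
      simp [Measure.restrict_apply MeasurableSet.univ]
  have h := congrArg (fun (μ : Measure (γ × β)) => μ S) heq
  simp only [Measure.smul_apply, smul_eq_mul] at h
  rw [Measure.map_apply hW hS, Measure.restrict_apply (hW hS),
    Measure.map_apply hW hS] at h
  rw [h, mul_comm]

/-- Two-link triad bounds (Proposition): with `(Z_i,A_i),(Z_j,A_j),(Z_k,A_k)`
i.i.d. and the shocks independent of them, (i) the conditional CDF of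
`u = A_j − A_k + ε_ij − ε_ik` given `(Z_i,Z_j,Z_k) = (z_i,z_j,z_k)` depends
only on `(z_j,z_k)`, (ii) the conditional probability of the two-link event
with `{δ_ij − δ_ik ≤ c}` is below `G₂(c|z_j,z_k)`, and (iii) that of the
flipped event with `{δ_ij − δ_ik > c}` is below `1 − G₂(c|z_j,z_k)`. -/
theorem triad_two_link_conditional_bounds
    {Ω : Type*} [MeasurableSpace Ω] (P : Measure Ω) [IsProbabilityMeasure P]
    {β : Type*} [MeasurableSpace β] [Countable β] [MeasurableSingletonClass β]
    (Zi Zj Zk : Ω → β) (Ai Aj Ak : Ω → ℝ)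
    (hZi : Measurable Zi) (hZj : Measurable Zj) (hZk : Measurable Zk)
    (hAi : Measurable Ai) (hAj : Measurable Aj) (hAk : Measurable Ak)
    (hindep_pairs : iIndepFun
      ![fun ω => (Zi ω, Ai ω), fun ω => (Zj ω, Aj ω), fun ω => (Zk ω, Ak ω)] P)
    (hident_ij : IdentDistrib (fun ω => (Zi ω, Ai ω)) (fun ω => (Zj ω, Aj ω)) P P)
    (hident_ik : IdentDistrib (fun ω => (Zi ω, Ai ω)) (fun ω => (Zk ω, Ak ω)) P P)
    (εij εik : Ω → ℝ)
    (hεij : Measurable εij) (hεik : Measurable εik)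
    (hindep_shocks : IndepFun (fun ω => (εij ω, εik ω))
      (fun ω => ((Zi ω, Ai ω), (Zj ω, Aj ω), (Zk ω, Ak ω))) P)
    (δij δik : Ω → ℝ)
    (hδij : Measurable δij) (hδik : Measurable δik)
    (Yij Yik : Ω → ℝ)
    (hYij : Yij = fun ω => if Ai ω + Aj ω + εij ω ≤ δij ω then (1 : ℝ) else 0)
    (hYik : Yik = fun ω => if Ai ω + Ak ω + εik ω ≤ δik ω then (1 : ℝ) else 0)
    (u : Ω → ℝ) (hu : u = fun ω => Aj ω - Ak ω + εij ω - εik ω)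
    (c : ℝ) (zi zj zk : β)
    (hpos : 0 < P {ω | Zi ω = zi ∧ Zj ω = zj ∧ Zk ω = zk}) :
    P[{ω | u ω ≤ c} | {ω | Zi ω = zi ∧ Zj ω = zj ∧ Zk ω = zk}]
        = P[{ω | u ω ≤ c} | {ω | Zj ω = zj ∧ Zk ω = zk}] ∧
    P[{ω | Yij ω * (1 - Yik ω) = 1 ∧ δij ω - δik ω ≤ c}
        | {ω | Zi ω = zi ∧ Zj ω = zj ∧ Zk ω = zk}]
        ≤ P[{ω | u ω ≤ c} | {ω | Zj ω = zj ∧ Zk ω = zk}] ∧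
    P[{ω | (1 - Yij ω) * Yik ω = 1 ∧ c < δij ω - δik ω}
        | {ω | Zi ω = zi ∧ Zj ω = zj ∧ Zk ω = zk}]
        ≤ 1 - P[{ω | u ω ≤ c} | {ω | Zj ω = zj ∧ Zk ω = zk}] := by
  -- notation
  set X : Ω → β × ℝ := fun ω => (Zi ω, Ai ω) with hXdef
  set Y : Ω → (β × ℝ) × (β × ℝ) := fun ω => ((Zj ω, Aj ω), (Zk ω, Ak ω)) with hYdef
  set E : Ω → ℝ × ℝ := fun ω => (εij ω, εik ω) with hEdef
  have hXm : Measurable X := (hZi.prodMk hAi)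
  have hYm : Measurable Y := (hZj.prodMk hAj).prodMk (hZk.prodMk hAk)
  have hEm : Measurable E := hεij.prodMk hεik
  have hmeas : ∀ i, Measurable
      (![fun ω => (Zi ω, Ai ω), fun ω => (Zj ω, Aj ω), fun ω => (Zk ω, Ak ω)] i) := by
    intro i
    fin_cases i
    · exact hZi.prodMk hAi
    · exact hZj.prodMk hAj
    · exact hZk.prodMk hAk
  have h2 : IndepFun X Y P := by
    have := hindep_pairs.indepFun_prodMk hmeas 1 2 0 (by decide) (by decide)
    exact this.symm
  have h1 : IndepFun E (fun ω => (X ω, Y ω)) P := hindep_shocks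
  have hindep : IndepFun (fun ω => (E ω, Y ω)) X P :=
    indepFun_pair_left_aux P hXm hYm hEm h1 h2
  set W : Ω → (ℝ × ℝ) × ((β × ℝ) × (β × ℝ)) := fun ω => (E ω, Y ω) with hWdef
  have hWm : Measurable W := hEm.prodMk hYm
  -- target sets
  set SB : Set ((ℝ × ℝ) × ((β × ℝ) × (β × ℝ))) := {p | p.2.1.1 = zj ∧ p.2.2.1 = zk} with hSBdef
  set SU : Set ((ℝ × ℝ) × ((β × ℝ) × (β × ℝ))) :=
    {p | p.2.1.2 - p.2.2.2 + p.1.1 - p.1.2 ≤ c ∧ p.2.1.1 = zj ∧ p.2.2.1 = zk} with hSUdef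
  set T : Set (β × ℝ) := {q | q.1 = zi} with hTdef
  have hSBm : MeasurableSet SB := by
    have h1' : MeasurableSet {p : (ℝ × ℝ) × ((β × ℝ) × (β × ℝ)) | p.2.1.1 = zj} :=
      (measurable_fst.comp (measurable_fst.comp measurable_snd)) (measurableSet_singleton zj)
    have h2' : MeasurableSet {p : (ℝ × ℝ) × ((β × ℝ) × (β × ℝ)) | p.2.2.1 = zk} :=
      (measurable_fst.comp (measurable_snd.comp measurable_snd)) (measurableSet_singleton zk)
    exact h1'.inter h2'
  have hSUm : MeasurableSet SU := by
    have h0 : MeasurableSet {p : (ℝ × ℝ) × ((β × ℝ) × (β × ℝ)) |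
        p.2.1.2 - p.2.2.2 + p.1.1 - p.1.2 ≤ c} := by
      have : Measurable (fun p : (ℝ × ℝ) × ((β × ℝ) × (β × ℝ)) =>
          p.2.1.2 - p.2.2.2 + p.1.1 - p.1.2) :=
        (((measurable_snd.comp (measurable_fst.comp measurable_snd)).sub
          (measurable_snd.comp (measurable_snd.comp measurable_snd))).add
          (measurable_fst.comp measurable_fst)).sub (measurable_snd.comp measurable_fst)
      exact this measurableSet_Iic
    exact h0.inter hSBm
  have hTm : MeasurableSet T := measurable_fst (measurableSet_singleton zi)
  -- basic set identities
  have hB3 : {ω | Zi ω = zi ∧ Zj ω = zj ∧ Zk ω = zk} = W ⁻¹' SB ∩ X ⁻¹' T := by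
    ext ω; simp [hSBdef, hTdef, hWdef, hXdef, hYdef]; tauto
  have hB2 : {ω | Zj ω = zj ∧ Zk ω = zk} = W ⁻¹' SB := by
    ext ω; simp [hSBdef, hWdef, hYdef]
  have hUB2 : {ω | Zj ω = zj ∧ Zk ω = zk} ∩ {ω | u ω ≤ c} = W ⁻¹' SU := by
    ext ω; simp [hSUdef, hWdef, hYdef, hEdef, hu]; tauto
  have hUB3 : {ω | Zi ω = zi ∧ Zj ω = zj ∧ Zk ω = zk} ∩ {ω | u ω ≤ c}
      = W ⁻¹' SU ∩ X ⁻¹' T := by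
    ext ω; simp [hSUdef, hTdef, hWdef, hXdef, hYdef, hEdef, hu]; tauto
  -- independence computations
  have hkeyB : P (W ⁻¹' SB ∩ X ⁻¹' T) = P (W ⁻¹' SB) * P (X ⁻¹' T) :=
    hindep.measure_inter_preimage_eq_mul SB T hSBm hTm
  have hkeyU : P (W ⁻¹' SU ∩ X ⁻¹' T) = P (W ⁻¹' SU) * P (X ⁻¹' T) :=
    hindep.measure_inter_preimage_eq_mul SU T hSUm hTm
  -- measurability of conditioning sets
  have hB3m : MeasurableSet {ω | Zi ω = zi ∧ Zj ω = zj ∧ Zk ω = zk} := by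
    rw [hB3]; exact (hWm hSBm).inter (hXm hTm)
  have hB2m : MeasurableSet {ω | Zj ω = zj ∧ Zk ω = zk} := by
    rw [hB2]; exact hWm hSBm
  have hum : Measurable u := by rw [hu]; exact ((hAj.sub hAk).add hεij).sub hεik
  -- positivity facts
  have hT0 : P (X ⁻¹' T) ≠ 0 := by
    intro h
    have hsub : {ω | Zi ω = zi ∧ Zj ω = zj ∧ Zk ω = zk} ⊆ X ⁻¹' T := by
      rw [hB3]; exact Set.inter_subset_right
    exact absurd (le_antisymm ((measure_mono hsub).trans h.le) zero_le) hpos.ne'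
  have hTtop : P (X ⁻¹' T) ≠ ⊤ := measure_ne_top P _
  -- Part (i)
  have hi : P[{ω | u ω ≤ c} | {ω | Zi ω = zi ∧ Zj ω = zj ∧ Zk ω = zk}]
      = P[{ω | u ω ≤ c} | {ω | Zj ω = zj ∧ Zk ω = zk}] := by
    rw [cond_apply hB3m, cond_apply hB2m, hUB3, hUB2, hB3, hB2, hkeyB, hkeyU,
      ENNReal.mul_inv (Or.inr hTtop) (Or.inr hT0)]
    have hc : (P (W ⁻¹' SB))⁻¹ * (P (X ⁻¹' T))⁻¹ * (P (W ⁻¹' SU) * P (X ⁻¹' T))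
        = (P (W ⁻¹' SB))⁻¹ * P (W ⁻¹' SU) * ((P (X ⁻¹' T))⁻¹ * P (X ⁻¹' T)) := by ring
    rw [hc, ENNReal.inv_mul_cancel hT0 hTtop, mul_one]
  refine ⟨hi, ?_, ?_⟩
  -- Part (ii)
  · have hsub : {ω | Yij ω * (1 - Yik ω) = 1 ∧ δij ω - δik ω ≤ c} ⊆ {ω | u ω ≤ c} := by
      intro ω ⟨h1', h2'⟩
      subst hYij hYik hu
      simp only [Set.mem_setOf_eq] at h1' h2' ⊢
      by_cases hij : Ai ω + Aj ω + εij ω ≤ δij ω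
      · by_cases hik : Ai ω + Ak ω + εik ω ≤ δik ω
        · simp [hij, hik] at h1'
        · push_neg at hik; linarith
      · simp [hij] at h1'
    calc P[{ω | Yij ω * (1 - Yik ω) = 1 ∧ δij ω - δik ω ≤ c}
        | {ω | Zi ω = zi ∧ Zj ω = zj ∧ Zk ω = zk}]
        ≤ P[{ω | u ω ≤ c} | {ω | Zi ω = zi ∧ Zj ω = zj ∧ Zk ω = zk}] := measure_mono hsub
      _ = _ := hi
  -- Part (iii)
  · have hsub : {ω | (1 - Yij ω) * Yik ω = 1 ∧ c < δij ω - δik ω} ⊆ {ω | u ω ≤ c}ᶜ := by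
      intro ω ⟨h1', h2'⟩
      subst hYij hYik hu
      simp only [Set.mem_compl_iff, Set.mem_setOf_eq, not_le] at h1' ⊢
      by_cases hij : Ai ω + Aj ω + εij ω ≤ δij ω
      · simp [hij] at h1'
      · by_cases hik : Ai ω + Ak ω + εik ω ≤ δik ω
        · push_neg at hij; linarith
        · simp [hij, hik] at h1'
    haveI : IsProbabilityMeasure (P[|{ω | Zi ω = zi ∧ Zj ω = zj ∧ Zk ω = zk}]) :=
      cond_isProbabilityMeasure hpos.ne'
    calc P[{ω | (1 - Yij ω) * Yik ω = 1 ∧ c < δij ω - δik ω}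
        | {ω | Zi ω = zi ∧ Zj ω = zj ∧ Zk ω = zk}]
        ≤ P[{ω | u ω ≤ c}ᶜ | {ω | Zi ω = zi ∧ Zj ω = zj ∧ Zk ω = zk}] := measure_mono hsub
      _ = 1 - P[{ω | u ω ≤ c} | {ω | Zi ω = zi ∧ Zj ω = zj ∧ Zk ω = zk}] :=
        prob_compl_eq_one_sub (hum measurableSet_Iic)
      _ = 1 - P[{ω | u ω ≤ c} | {ω | Zj ω = zj ∧ Zk ω = zk}] := by rw [hi]
end

section
/- Let A_i, A_j, A_k, A_ℓ, ε_{ij}, ε_{ik}, ε_{iℓ}, δ_{ij}, δ_{ik}, δ_{iℓ}, and c be real numbers. For each pair (a,b) set v_{ab} := A_a + A_b + ε_{ab} and Y_{ab} := 1 if v_{ab} ≤ δ_{ab} and Y_{ab} := 0 otherwise. Then (i) v_{ij} + v_{ik} − 2·v_{iℓ} = (A_j + ε_{ij}) + (A_k + ε_{ik}) − 2·(A_ℓ + ε_{iℓ}) (the hub agent's fixed effect A_i cancels); (ii) Y_{ij} · Y_{ik} · (1 − Y_{iℓ}) · 1{δ_{ij} + δ_{ik} − 2δ_{iℓ} ≤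 c} ≤ 1{(A_j + ε_{ij}) + (A_k + ε_{ik}) − 2(A_ℓ + ε_{iℓ}) ≤ c}; and (iii) (1 − Y_{ij}) · (1 − Y_{ik}) · Y_{iℓ} · 1{δ_{ij} + δ_{ik} − 2δ_{iℓ} > c} ≤ 1{(A_j + ε_{ij}) + (A_k + ε_{ik}) − 2(A_ℓ + ε_{iℓ}) > c}. -/
/-- Pointwise weighted-differencing bound within a tetrad `(i,j,k,ℓ)`:
the star configuration on links `(ij, ik, iℓ)` with weights `(+1,+1,−2)`
gives the hub agent `i` incidence load zero, so `A_i` is differenced out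
while `A_j, A_k, A_ℓ` are retained. -/
theorem weighted_star_pointwise_bound
    (Ai Aj Ak Al εij εik εil δij δik δil c : ℝ)
    (vij vik vil : ℝ)
    (hvij : vij = Ai + Aj + εij) (hvik : vik = Ai + Ak + εik)
    (hvil : vil = Ai + Al + εil)
    (Yij Yik Yil : ℝ)
    (hYij : Yij = if vij ≤ δij then (1 : ℝ) else 0)
    (hYik : Yik = if vik ≤ δik then (1 : ℝ) else 0)
    (hYil : Yil = if vil ≤ δil then (1 : ℝ) else 0) :
    vij + vik - 2 * vil = (Aj + εij) + (Ak + εik) - 2 * (Al + εil) ∧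
    Yij * Yik * (1 - Yil) * (if δij + δik - 2 * δil ≤ c then (1 : ℝ) else 0)
      ≤ (if (Aj + εij) + (Ak + εik) - 2 * (Al + εil) ≤ c then (1 : ℝ) else 0) ∧
    (1 - Yij) * (1 - Yik) * Yil * (if c < δij + δik - 2 * δil then (1 : ℝ) else 0)
      ≤ (if c < (Aj + εij) + (Ak + εik) - 2 * (Al + εil) then (1 : ℝ) else 0) := by
  subst hvij hvik hvil hYij hYik hYil
  refine ⟨by ring, ?_, ?_⟩ <;>
    split_ifs <;> simp_all <;> linarith
end

section
/- Let (Ω, F, P) be a probability space and S a finite set of agents. Let (Z_i, A_i)_{i ∈ S} be independent and identically distributed random pairs, with each Z_i taking values in a countable measurable space and each A_i real-valued. Let E be a finite set of unordered pairs of distinct elements of S with weights ω : E → ℝ, and let (ε_e)_{e ∈ E} be real random variables such that the vector (ε_e)_{e ∈ E} is independent of ((Z_i, A_i))_{i ∈ S}. Let (δ_e)_{e ∈ E} be arbitrary real random variables and define Y_e := 1{A_a + A_b + ε_e ≤ δ_e} for e = {a,b}. Set σ_i := Σ_{e ∋ i} ω_e, S_R := {i ∈ S : σ_i ≠ 0},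 E⁺ := {e : ω_e > 0}, E⁻ := {e : ω_e < 0}, and U := Σ_{i ∈ S_R} σ_i A_i + Σ_{e ∈ E} ω_e ε_e. Then for every c ∈ ℝ and every value z_S = (z_i)_{i ∈ S} with P(Z_S = z_S) > 0: (i) P(U ≤ c | Z_S = z_S) = P(U ≤ c | Z_{S_R} = z_{S_R}), i.e., the conditional CDF of U given Z_S depends only on the coordinates of the retained agents S_R (and equals the unconditional probability P(U ≤ c) when S_R = ∅); (ii) P( Y_e = 1 for all e ∈ E⁺, Y_e = 0 for all e ∈ E⁻, and Σ_e ω_e δ_e ≤ c | Z_S = z_S ) ≤ P(U ≤ c | Z_{S_R} = z_{S_R}); and (iii) P( Y_e = 0 for all e ∈ E⁺, Y_e = 1 for all e ∈ E⁻, and Σ_e ω_e δ_e > c | Z_S = z_S ) ≤ 1 − P(U ≤ c | Z_{S_R} = z_{S_R}). -/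
open MeasureTheory ProbabilityTheory

lemma indepFun_prod_mk_of_indepFun
    {Ω α γ₁ γ₂ : Type*} [MeasurableSpace Ω] [MeasurableSpace α]
    [MeasurableSpace γ₁] [MeasurableSpace γ₂]
    {P : Measure Ω} [IsProbabilityMeasure P]
    {X : Ω → α} {Y : Ω → γ₁} {W : Ω → γ₂}
    (hX : Measurable X) (hY : Measurable Y) (hW : Measurable W)
    (h1 : IndepFun X (fun ω => (Y ω, W ω)) P) (h2 : IndepFun Y W P) :
    IndepFun (fun ω => (X ω, Y ω)) W P := by
  have hXY : IndepFun X Y P := h1.comp measurable_id measurable_fst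
  have hmXY : Measurable fun ω => (X ω, Y ω) := hX.prodMk hY
  have hmYW : Measurable fun ω => (Y ω, W ω) := hY.prodMk hW
  haveI : IsProbabilityMeasure (P.map X) := Measure.isProbabilityMeasure_map hX.aemeasurable
  haveI : IsProbabilityMeasure (P.map Y) := Measure.isProbabilityMeasure_map hY.aemeasurable
  haveI : IsProbabilityMeasure (P.map W) := Measure.isProbabilityMeasure_map hW.aemeasurable
  rw [indepFun_iff_map_prod_eq_prod_map_map hmXY.aemeasurable hW.aemeasurable]
  have e1 : P.map (fun ω => (X ω, (Y ω, W ω)))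
      = (P.map X).prod (P.map (fun ω => (Y ω, W ω))) :=
    (indepFun_iff_map_prod_eq_prod_map_map hX.aemeasurable hmYW.aemeasurable).mp h1
  have e2 : P.map (fun ω => (Y ω, W ω)) = (P.map Y).prod (P.map W) :=
    (indepFun_iff_map_prod_eq_prod_map_map hY.aemeasurable hW.aemeasurable).mp h2
  have e3 : P.map (fun ω => (X ω, Y ω)) = (P.map X).prod (P.map Y) :=
    (indepFun_iff_map_prod_eq_prod_map_map hX.aemeasurable hY.aemeasurable).mp hXY
  have hcomp : (fun ω => ((X ω, Y ω), W ω))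
      = (MeasurableEquiv.prodAssoc.symm : α × γ₁ × γ₂ → (α × γ₁) × γ₂)
        ∘ (fun ω => (X ω, (Y ω, W ω))) := rfl
  rw [hcomp, ← Measure.map_map MeasurableEquiv.prodAssoc.symm.measurable
      (hX.prodMk hmYW), e1, e2, e3, ← Measure.prodAssoc_prod,
    Measure.map_map MeasurableEquiv.prodAssoc.symm.measurable
      MeasurableEquiv.prodAssoc.measurable]
  simp

lemma sym2_lift_add_eq_sum {ι : Type*} [Fintype ι] [DecidableEq ι]
    (f : ι → ℝ) (e : Sym2 ι) (he : ¬ e.IsDiag) :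
    Sym2.lift ⟨fun a b => f a + f b, fun a b => by ring⟩ e
      = ∑ i ∈ Finset.univ.filter (fun i => i ∈ e), f i := by
  induction e using Sym2.ind with
  | _ a b =>
    have hab : a ≠ b := by simpa using he
    have hfe : Finset.univ.filter (fun i => i ∈ (s(a, b) : Sym2 ι)) = {a, b} := by
      ext i; simp [Sym2.mem_iff]
    rw [hfe, Finset.sum_insert (by simpa using hab)]
    simp

lemma sum_edge_weights {ι : Type*} [Fintype ι] [DecidableEq ι]
    (E : Finset (Sym2 ι)) (hE : ∀ e ∈ E, ¬ e.IsDiag) (ω : Sym2 ι → ℝ) (f : ι → ℝ) :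
    ∑ e ∈ E, ω e * Sym2.lift ⟨fun a b => f a + f b, fun a b => by ring⟩ e
      = ∑ i, (∑ e ∈ E.filter (fun e => i ∈ e), ω e) * f i := by
  calc ∑ e ∈ E, ω e * Sym2.lift ⟨fun a b => f a + f b, fun a b => by ring⟩ e
      = ∑ e ∈ E, ∑ i ∈ Finset.univ.filter (fun i => i ∈ e), ω e * f i := by
        refine Finset.sum_congr rfl fun e heE => ?_
        rw [sym2_lift_add_eq_sum f e (hE e heE), Finset.mul_sum]
    _ = ∑ e ∈ E, ∑ i, if i ∈ e then ω e * f i else 0 := by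
        refine Finset.sum_congr rfl fun e _ => ?_
        rw [Finset.sum_filter]
    _ = ∑ i, ∑ e ∈ E, if i ∈ e then ω e * f i else 0 := Finset.sum_comm
    _ = ∑ i, (∑ e ∈ E.filter (fun e => i ∈ e), ω e) * f i := by
        refine Finset.sum_congr rfl fun i _ => ?_
        rw [Finset.sum_mul, Finset.sum_filter]

/-- General weighted cycle-based identifying restrictions (Proposition):
with i.i.d. agent pairs `(Z_i, A_i)`, link shocks independent of them,
weights `ω` on links `E`, incidence sums `σ`, retained agents
`S_R = {i : σ_i ≠ 0}`, and residual composite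
`U = Σ_{i ∈ S_R} σ_i A_i + Σ_e ω_e ε_e`:
(i) the conditional CDF of `U` given `Z_S = z_S` depends only on the
retained coordinates (and is the unconditional one when `S_R = ∅`);
(ii)-(iii) the bounding-by-c conditional probability inequalities. -/
theorem weighted_cycle_conditional_bounds
    {Ω : Type*} [MeasurableSpace Ω] (P : Measure Ω) [IsProbabilityMeasure P]
    {ι : Type*} [Fintype ι] [DecidableEq ι]
    {β : Type*} [MeasurableSpace β] [Countable β] [MeasurableSingletonClass β]
    (Z : ι → Ω → β) (A : ι → Ω → ℝ)
    (hZ : ∀ i, Measurable (Z i)) (hA : ∀ i, Measurable (A i))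
    (hindep_pairs : iIndepFun
      (fun i => fun ω0 => (Z i ω0, A i ω0)) P)
    (hident : ∀ i j, IdentDistrib (fun ω0 => (Z i ω0, A i ω0))
      (fun ω0 => (Z j ω0, A j ω0)) P P)
    (E : Finset (Sym2 ι)) (hE : ∀ e ∈ E, ¬ e.IsDiag)
    (ω : Sym2 ι → ℝ)
    (ε : Sym2 ι → Ω → ℝ) (hε : ∀ e, Measurable (ε e))
    (hindep_shocks : IndepFun
      (fun ω0 => fun e : {e // e ∈ E} => ε e.1 ω0)
      (fun ω0 => fun i : ι => (Z i ω0, A i ω0)) P)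
    (δ : Sym2 ι → Ω → ℝ) (hδ : ∀ e, Measurable (δ e))
    (Y : Sym2 ι → Ω → ℝ)
    (hY : Y = fun e ω0 =>
      if Sym2.lift ⟨fun a b => A a ω0 + A b ω0, fun a b => by ring⟩ e + ε e ω0
          ≤ δ e ω0 then (1 : ℝ) else 0)
    (σ : ι → ℝ)
    (hσ : σ = fun i => ∑ e ∈ E.filter (fun e => i ∈ e), ω e)
    (U : Ω → ℝ)
    (hU : U = fun ω0 =>
      (∑ i ∈ Finset.univ.filter (fun i => σ i ≠ 0), σ i * A i ω0)
        + ∑ e ∈ E, ω e * ε e ω0)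
    (c : ℝ) (z : ι → β)
    (hpos : 0 < P {ω0 | ∀ i, Z i ω0 = z i}) :
    (P[{ω0 | U ω0 ≤ c} | {ω0 | ∀ i, Z i ω0 = z i}]
        = P[{ω0 | U ω0 ≤ c} | {ω0 | ∀ i, σ i ≠ 0 → Z i ω0 = z i}]) ∧
    ((∀ i, σ i = 0) →
      P[{ω0 | U ω0 ≤ c} | {ω0 | ∀ i, Z i ω0 = z i}] = P {ω0 | U ω0 ≤ c}) ∧
    (P[{ω0 | (∀ e ∈ E, 0 < ω e → Y e ω0 = 1) ∧ (∀ e ∈ E, ω e < 0 → Y e ω0 = 0) ∧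
            (∑ e ∈ E, ω e * δ e ω0) ≤ c} | {ω0 | ∀ i, Z i ω0 = z i}]
        ≤ P[{ω0 | U ω0 ≤ c} | {ω0 | ∀ i, σ i ≠ 0 → Z i ω0 = z i}]) ∧
    (P[{ω0 | (∀ e ∈ E, 0 < ω e → Y e ω0 = 0) ∧ (∀ e ∈ E, ω e < 0 → Y e ω0 = 1) ∧
            c < (∑ e ∈ E, ω e * δ e ω0)} | {ω0 | ∀ i, Z i ω0 = z i}]
        ≤ 1 - P[{ω0 | U ω0 ≤ c} | {ω0 | ∀ i, σ i ≠ 0 → Z i ω0 = z i}]) := by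
  have hpm : ∀ i : ι, Measurable fun ω0 => (Z i ω0, A i ω0) := fun i => (hZ i).prodMk (hA i)
  set Tf : Finset ι := Finset.univ.filter (fun i => σ i ≠ 0) with hTfdef
  set Tc : Finset ι := Finset.univ.filter (fun i => σ i = 0) with hTcdef
  set s : Set Ω := {ω0 | U ω0 ≤ c} with hsdef
  set tA : Set Ω := {ω0 | ∀ i, Z i ω0 = z i} with htAdef
  set tT : Set Ω := {ω0 | ∀ i, σ i ≠ 0 → Z i ω0 = z i} with htTdef
  set tC : Set Ω := {ω0 | ∀ i, σ i = 0 → Z i ω0 = z i} with htCdef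
  have hmemTf : ∀ i : ι, i ∈ Tf ↔ σ i ≠ 0 := fun i => by simp [hTfdef]
  have hmemTc : ∀ i : ι, i ∈ Tc ↔ σ i = 0 := fun i => by simp [hTcdef]
  -- measurability
  have hUm : Measurable U := by
    rw [hU]
    exact (Finset.measurable_sum _ fun i _ => (hA i).const_mul _).add
      (Finset.measurable_sum _ fun e _ => (hε e).const_mul _)
  have hsm : MeasurableSet s := measurableSet_le hUm measurable_const
  have htAm : MeasurableSet tA := by
    have h : tA = ⋂ i, Z i ⁻¹' {z i} := by
      ext a; simp [htAdef, Set.mem_iInter]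
    rw [h]; exact MeasurableSet.iInter fun i => hZ i (measurableSet_singleton _)
  have htTm : MeasurableSet tT := by
    have h : tT = ⋂ i, {ω0 | σ i ≠ 0 → Z i ω0 = z i} := by
      ext a; simp [htTdef, Set.mem_iInter]
    rw [h]
    refine MeasurableSet.iInter fun i => ?_
    by_cases hi : σ i = 0
    · have h2 : {ω0 | σ i ≠ 0 → Z i ω0 = z i} = Set.univ := by
        ext a; simp [hi]
      rw [h2]; exact MeasurableSet.univ
    · have h2 : {ω0 | σ i ≠ 0 → Z i ω0 = z i} = Z i ⁻¹' {z i} := by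
        ext a; simp [hi]
      rw [h2]; exact hZ i (measurableSet_singleton _)
  -- set algebra
  have htA_eq : tA = tT ∩ tC := by
    ext a
    simp only [htAdef, htTdef, htCdef, Set.mem_inter_iff, Set.mem_setOf_eq]
    constructor
    · intro h; exact ⟨fun i _ => h i, fun i _ => h i⟩
    · rintro ⟨h1, h2⟩ i
      by_cases hi : σ i = 0
      · exact h2 i hi
      · exact h1 i hi
  have htT0 : P tT ≠ 0 := (hpos.trans_le (measure_mono (htA_eq ▸ Set.inter_subset_left))).ne'
  have htC0 : P tC ≠ 0 := (hpos.trans_le (measure_mono (htA_eq ▸ Set.inter_subset_right))).ne'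
  have htTtop : P tT ≠ ⊤ := measure_ne_top P tT
  have htCtop : P tC ≠ ⊤ := measure_ne_top P tC
  -- independence of the composite from the dropped coordinates
  have hdisj : Disjoint Tf Tc := by
    rw [Finset.disjoint_left]
    intro i hiT hiC
    exact ((hmemTf i).1 hiT) ((hmemTc i).1 hiC)
  have h2 : IndepFun (fun a => fun i : ↥Tf => (Z i.1 a, A i.1 a))
      (fun a => fun i : ↥Tc => (Z i.1 a, A i.1 a)) P :=
    hindep_pairs.indepFun_finset Tf Tc hdisj hpm
  have hsplit : Measurable (fun g : ι → β × ℝ =>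
      ((fun i : ↥Tf => g i.1), (fun i : ↥Tc => g i.1))) :=
    Measurable.prodMk (measurable_pi_lambda _ fun i => measurable_pi_apply _)
      (measurable_pi_lambda _ fun i => measurable_pi_apply _)
  have h1 : IndepFun (fun a => fun e : {e // e ∈ E} => ε e.1 a)
      (fun a => ((fun i : ↥Tf => (Z i.1 a, A i.1 a)), (fun i : ↥Tc => (Z i.1 a, A i.1 a)))) P :=
    hindep_shocks.comp measurable_id hsplit
  have hεvm : Measurable (fun a => fun e : {e // e ∈ E} => ε e.1 a) :=
    measurable_pi_lambda _ fun e => hε e.1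
  have hpTm : Measurable (fun a => fun i : ↥Tf => (Z i.1 a, A i.1 a)) :=
    measurable_pi_lambda _ fun i => hpm i.1
  have hpCm : Measurable (fun a => fun i : ↥Tc => (Z i.1 a, A i.1 a)) :=
    measurable_pi_lambda _ fun i => hpm i.1
  have hXW : IndepFun
      (fun a => ((fun e : {e // e ∈ E} => ε e.1 a), (fun i : ↥Tf => (Z i.1 a, A i.1 a))))
      (fun a => fun i : ↥Tc => (Z i.1 a, A i.1 a)) P :=
    indepFun_prod_mk_of_indepFun hεvm hpTm hpCm h1 h2
  -- target sets in the product spaces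
  have hD2m : MeasurableSet {g : ↥Tc → β × ℝ | ∀ i, (g i).1 = z i.1} := by
    have h : {g : ↥Tc → β × ℝ | ∀ i, (g i).1 = z i.1}
        = ⋂ i : ↥Tc, (fun g : ↥Tc → β × ℝ => (g i).1) ⁻¹' {z i.1} := by
      ext g; simp [Set.mem_iInter]
    rw [h]
    exact MeasurableSet.iInter fun i =>
      ((measurable_pi_apply i).fst) (measurableSet_singleton _)
  have hD1'm : MeasurableSet {p : ({e // e ∈ E} → ℝ) × (↥Tf → β × ℝ) |
      ∀ i : ↥Tf, (p.2 i).1 = z i.1} := by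
    have h : {p : ({e // e ∈ E} → ℝ) × (↥Tf → β × ℝ) | ∀ i : ↥Tf, (p.2 i).1 = z i.1}
        = ⋂ i : ↥Tf, (fun p : ({e // e ∈ E} → ℝ) × (↥Tf → β × ℝ) => (p.2 i).1) ⁻¹' {z i.1} := by
      ext p; simp [Set.mem_iInter]
    rw [h]
    exact MeasurableSet.iInter fun i =>
      (((measurable_pi_apply i).comp measurable_snd).fst) (measurableSet_singleton _)
  have hgm : Measurable (fun p : ({e // e ∈ E} → ℝ) × (↥Tf → β × ℝ) =>
      (∑ i : ↥Tf, σ i.1 * (p.2 i).2) + ∑ e : {e // e ∈ E}, ω e.1 * p.1 e) := by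
    refine Measurable.add ?_ ?_
    · exact Finset.measurable_sum _ fun i _ =>
        (((measurable_pi_apply i).comp measurable_snd).snd).const_mul _
    · exact Finset.measurable_sum _ fun e _ =>
        ((measurable_pi_apply e).comp measurable_fst).const_mul _
  have hD1m : MeasurableSet {p : ({e // e ∈ E} → ℝ) × (↥Tf → β × ℝ) |
      ((∑ i : ↥Tf, σ i.1 * (p.2 i).2) + ∑ e : {e // e ∈ E}, ω e.1 * p.1 e ≤ c)
        ∧ ∀ i : ↥Tf, (p.2 i).1 = z i.1} := by
    rw [Set.setOf_and]
    exact MeasurableSet.inter (measurableSet_le hgm measurable_const) hD1'm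
  -- identify preimages
  have hUeq : ∀ a, U a
      = (∑ i : ↥Tf, σ i.1 * A i.1 a) + ∑ e : {e // e ∈ E}, ω e.1 * ε e.1 a := by
    intro a
    rw [hU]
    rw [Finset.sum_coe_sort Tf (fun i => σ i * A i a),
      Finset.sum_coe_sort E (fun e => ω e * ε e a)]
  have hpreC : (fun a => fun i : ↥Tc => (Z i.1 a, A i.1 a)) ⁻¹'
      {g : ↥Tc → β × ℝ | ∀ i, (g i).1 = z i.1} = tC := by
    ext a
    simp only [Set.mem_preimage, Set.mem_setOf_eq, htCdef]
    constructor
    · intro h i hi; exact h ⟨i, (hmemTc i).2 hi⟩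
    · intro h i; exact h i.1 ((hmemTc i.1).1 i.2)
  have hpreT' : (fun a => ((fun e : {e // e ∈ E} => ε e.1 a),
        (fun i : ↥Tf => (Z i.1 a, A i.1 a)))) ⁻¹'
      {p : ({e // e ∈ E} → ℝ) × (↥Tf → β × ℝ) | ∀ i : ↥Tf, (p.2 i).1 = z i.1} = tT := by
    ext a
    simp only [Set.mem_preimage, Set.mem_setOf_eq, htTdef]
    constructor
    · intro h i hi; exact h ⟨i, (hmemTf i).2 hi⟩
    · intro h i; exact h i.1 ((hmemTf i.1).1 i.2)
  have hpre1 : (fun a => ((fun e : {e // e ∈ E} => ε e.1 a),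
        (fun i : ↥Tf => (Z i.1 a, A i.1 a)))) ⁻¹'
      {p : ({e // e ∈ E} → ℝ) × (↥Tf → β × ℝ) |
        ((∑ i : ↥Tf, σ i.1 * (p.2 i).2) + ∑ e : {e // e ∈ E}, ω e.1 * p.1 e ≤ c)
          ∧ ∀ i : ↥Tf, (p.2 i).1 = z i.1} = s ∩ tT := by
    ext a
    simp only [Set.mem_preimage, Set.mem_setOf_eq, Set.mem_inter_iff, hsdef, htTdef]
    constructor
    · rintro ⟨h1, h2⟩
      exact ⟨by rw [hUeq a]; exact h1, fun i hi => h2 ⟨i, (hmemTf i).2 hi⟩⟩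
    · rintro ⟨h1, h2⟩
      exact ⟨by rw [← hUeq a]; exact h1, fun i => h2 i.1 ((hmemTf i.1).1 i.2)⟩
  -- product formulas
  have hkey1 : P ((s ∩ tT) ∩ tC) = P (s ∩ tT) * P tC := by
    rw [← hpre1, ← hpreC]
    exact hXW.measure_inter_preimage_eq_mul _ _ hD1m hD2m
  have hkey2 : P (tT ∩ tC) = P tT * P tC := by
    rw [← hpreT', ← hpreC]
    exact hXW.measure_inter_preimage_eq_mul _ _ hD1'm hD2m
  -- (i)
  have hI : P[s|tA] = P[s|tT] := by
    rw [cond_apply htAm, cond_apply htTm]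
    have e1 : tA ∩ s = (s ∩ tT) ∩ tC := by
      rw [htA_eq]; ext a; simp only [Set.mem_inter_iff]; tauto
    have e2 : tT ∩ s = s ∩ tT := Set.inter_comm _ _
    rw [e1, hkey1, e2, htA_eq, hkey2, ENNReal.mul_inv (Or.inl htT0) (Or.inl htTtop)]
    calc (P tT)⁻¹ * (P tC)⁻¹ * (P (s ∩ tT) * P tC)
        = ((P tT)⁻¹ * P (s ∩ tT)) * ((P tC)⁻¹ * P tC) := by ring
      _ = (P tT)⁻¹ * P (s ∩ tT) := by
          rw [ENNReal.inv_mul_cancel htC0 htCtop, mul_one]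
  -- expression of U as an edge sum
  have hU2 : ∀ a, U a = ∑ e ∈ E, ω e *
      (Sym2.lift ⟨fun x y => A x a + A y a, fun x y => by ring⟩ e + ε e a) := by
    intro a
    have hsum : ∑ e ∈ E, ω e * Sym2.lift ⟨fun x y => A x a + A y a, fun x y => by ring⟩ e
        = ∑ i, σ i * A i a := by
      rw [sum_edge_weights E hE ω (fun i => A i a)]
      exact Finset.sum_congr rfl fun i _ => by simp [hσ]
    have hTfsum : ∑ i ∈ Tf, σ i * A i a = ∑ i, σ i * A i a := by
      rw [hTfdef]
      exact Finset.sum_filter_of_ne fun i _ h h0 => h (by rw [h0, zero_mul])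
    rw [hU]
    show (∑ i ∈ Tf, σ i * A i a) + ∑ e ∈ E, ω e * ε e a = _
    rw [hTfsum, ← hsum, ← Finset.sum_add_distrib]
    exact Finset.sum_congr rfl fun e _ => by ring
  -- pointwise inclusions
  have hsub3 : {ω0 | (∀ e ∈ E, 0 < ω e → Y e ω0 = 1) ∧ (∀ e ∈ E, ω e < 0 → Y e ω0 = 0) ∧
      (∑ e ∈ E, ω e * δ e ω0) ≤ c} ⊆ s := by
    rintro a ⟨h1, h2, h3⟩
    show U a ≤ c
    rw [hU2 a]
    refine le_trans (Finset.sum_le_sum fun e heE => ?_) h3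
    rcases lt_trichotomy (ω e) 0 with hneg | hzero | hposω
    · have hY0 : (if Sym2.lift ⟨fun x y => A x a + A y a, fun x y => by ring⟩ e + ε e a
          ≤ δ e a then (1 : ℝ) else 0) = 0 := by
        have h' := h2 e heE hneg
        rw [hY] at h'
        exact h'
      split_ifs at hY0 with hcnd
      · norm_num at hY0
      · exact mul_le_mul_of_nonpos_left (not_le.mp hcnd).le hneg.le
    · simp [hzero]
    · have hY1 : (if Sym2.lift ⟨fun x y => A x a + A y a, fun x y => by ring⟩ e + ε e a
          ≤ δ e a then (1 : ℝ) else 0) = 1 := by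
        have h' := h1 e heE hposω
        rw [hY] at h'
        exact h'
      split_ifs at hY1 with hcnd
      · exact mul_le_mul_of_nonneg_left hcnd hposω.le
      · norm_num at hY1
  have hsub4 : {ω0 | (∀ e ∈ E, 0 < ω e → Y e ω0 = 0) ∧ (∀ e ∈ E, ω e < 0 → Y e ω0 = 1) ∧
      c < (∑ e ∈ E, ω e * δ e ω0)} ⊆ sᶜ := by
    rintro a ⟨h1, h2, h3⟩
    simp only [Set.mem_compl_iff, hsdef, Set.mem_setOf_eq, not_le]
    refine lt_of_lt_of_le h3 ?_
    rw [hU2 a]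
    refine Finset.sum_le_sum fun e heE => ?_
    rcases lt_trichotomy (ω e) 0 with hneg | hzero | hposω
    · have hY1 : (if Sym2.lift ⟨fun x y => A x a + A y a, fun x y => by ring⟩ e + ε e a
          ≤ δ e a then (1 : ℝ) else 0) = 1 := by
        have h' := h2 e heE hneg
        rw [hY] at h'
        exact h'
      split_ifs at hY1 with hcnd
      · exact mul_le_mul_of_nonpos_left hcnd hneg.le
      · norm_num at hY1
    · simp [hzero]
    · have hY0 : (if Sym2.lift ⟨fun x y => A x a + A y a, fun x y => by ring⟩ e + ε e a
          ≤ δ e a then (1 : ℝ) else 0) = 0 := by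
        have h' := h1 e heE hposω
        rw [hY] at h'
        exact h'
      split_ifs at hY0 with hcnd
      · norm_num at hY0
      · exact mul_le_mul_of_nonneg_left (not_le.mp hcnd).le hposω.le
  haveI hPMcond : IsProbabilityMeasure (P[|tA]) := cond_isProbabilityMeasure hpos.ne'
  refine ⟨hI, ?_, ?_, ?_⟩
  · intro hall
    have htTuniv : tT = Set.univ := by
      ext a
      simp only [htTdef, Set.mem_setOf_eq, Set.mem_univ, iff_true]
      intro i hi
      exact absurd (hall i) hi
    rw [hI, htTuniv, cond_univ]
  · rw [← hI]
    exact measure_mono hsub3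
  · rw [← hI]
    calc P[{ω0 | (∀ e ∈ E, 0 < ω e → Y e ω0 = 0) ∧ (∀ e ∈ E, ω e < 0 → Y e ω0 = 1) ∧
            c < (∑ e ∈ E, ω e * δ e ω0)} | tA]
        ≤ P[sᶜ|tA] := measure_mono hsub4
      _ = 1 - P[s|tA] := prob_compl_eq_one_sub hsm
end

section
/- Let (Ω, F, P) be a probability space and S a finite set of agents. Let (Z_i, A_i)_{i ∈ S} be independent and identically distributed random pairs, with each Z_i taking values in a countable measurable space and each A_i real-valued. Let E be a finite set of unordered pairs of distinct elements of S with weights ω : E → ℝ, and let (ε_e)_{e ∈ E} be real random variables independent of ((Z_i, A_i))_{i ∈ S}. Let (δ_e)_{e ∈ E} be arbitrary real random variables and define Y_e := 1{A_a + A_b + ε_e ≤ δ_e} for e = {a,b}; set σ_i := Σ_{e ∋ i} ω_e, S_R := {i : σ_i ≠ 0}, E⁺ := {e : ω_e > 0}, E⁻ := {e : ω_e < 0}. Then for every c ∈ ℝ and any two values z_S and z'_S of Z_S with P(Z_S = z_S) > 0, P(Z_S = z'_S) > 0, and identical coordinates on S_R (z_i = z'_i for all i ∈ S_R): P( Y_e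 = 1 for all e ∈ E⁺, Y_e = 0 for all e ∈ E⁻, Σ_e ω_e δ_e ≤ c | Z_S = z_S ) + P( Y_e = 0 for all e ∈ E⁺, Y_e = 1 for all e ∈ E⁻, Σ_e ω_e δ_e > c | Z_S = z'_S ) ≤ 1. -/
open MeasureTheory ProbabilityTheory
open scoped ENNReal

section AuxIndep

variable {Ω : Type*}

/-- Monotonicity of independence in the right σ-algebra. -/
lemma aux_indep_mono_right {mΩ : MeasurableSpace Ω} {m1 m2 m2' : MeasurableSpace Ω}
    {μ : @Measure Ω mΩ} (h : @Indep Ω m1 m2 mΩ μ) (hle : m2' ≤ m2) :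
    @Indep Ω m1 m2' mΩ μ := by
  rw [Indep_iff] at h ⊢
  exact fun t1 t2 h1 h2 => h t1 t2 h1 (hle _ h2)

/-- If `m1` is independent of `m2 ⊔ m3` and `m2` is independent of `m3`, then
`m1 ⊔ m2` is independent of `m3`. -/
lemma aux_indep_sup_left {mΩ : MeasurableSpace Ω} {m1 m2 m3 : MeasurableSpace Ω}
    {μ : @Measure Ω mΩ} [@IsProbabilityMeasure Ω mΩ μ]
    (h1 : m1 ≤ mΩ) (h2 : m2 ≤ mΩ) (h3 : m3 ≤ mΩ)
    (h123 : @Indep Ω m1 (m2 ⊔ m3) mΩ μ) (h23 : @Indep Ω m2 m3 mΩ μ) :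
    @Indep Ω (m1 ⊔ m2) m3 mΩ μ := by
  have hp1 : IsPiSystem
      {s | ∃ s1 s2, MeasurableSet[m1] s1 ∧ MeasurableSet[m2] s2 ∧ s = s1 ∩ s2} := by
    rintro s ⟨s1, s2, hs1, hs2, rfl⟩ t ⟨t1, t2, ht1, ht2, rfl⟩ -
    exact ⟨s1 ∩ t1, s2 ∩ t2, hs1.inter ht1, hs2.inter ht2,
      (Set.inter_inter_inter_comm s1 s2 t1 t2)⟩
  have hgen1 : m1 ⊔ m2 = MeasurableSpace.generateFrom
      {s | ∃ s1 s2, MeasurableSet[m1] s1 ∧ MeasurableSet[m2] s2 ∧ s = s1 ∩ s2} := by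
    refine le_antisymm (sup_le ?_ ?_) (MeasurableSpace.generateFrom_le ?_)
    · intro s hs
      exact MeasurableSpace.measurableSet_generateFrom
        ⟨s, Set.univ, hs, @MeasurableSet.univ _ m2, (Set.inter_univ s).symm⟩
    · intro s hs
      exact MeasurableSpace.measurableSet_generateFrom
        ⟨Set.univ, s, @MeasurableSet.univ _ m1, hs, (Set.univ_inter s).symm⟩
    · rintro s ⟨s1, s2, hs1, hs2, rfl⟩
      exact ((le_sup_left : m1 ≤ m1 ⊔ m2) _ hs1).inter
        ((le_sup_right : m2 ≤ m1 ⊔ m2) _ hs2)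
  have hyp : @IndepSets Ω mΩ
      {s | ∃ s1 s2, MeasurableSet[m1] s1 ∧ MeasurableSet[m2] s2 ∧ s = s1 ∩ s2}
      {s | MeasurableSet[m3] s} μ := by
    rw [IndepSets_iff]
    rintro t1 t2 ⟨s1, s2, hs1, hs2, rfl⟩ ht2
    have ht2' : MeasurableSet[m3] t2 := ht2
    have hA : μ (s1 ∩ (s2 ∩ t2)) = μ s1 * μ (s2 ∩ t2) :=
      (Indep_iff _ _ _).mp h123 s1 (s2 ∩ t2) hs1
        (((le_sup_left : m2 ≤ m2 ⊔ m3) _ hs2).inter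
          ((le_sup_right : m3 ≤ m2 ⊔ m3) _ ht2'))
    have hB : μ (s2 ∩ t2) = μ s2 * μ t2 := (Indep_iff _ _ _).mp h23 s2 t2 hs2 ht2'
    have hC : μ (s1 ∩ s2) = μ s1 * μ s2 :=
      (Indep_iff _ _ _).mp h123 s1 s2 hs1 ((le_sup_left : m2 ≤ m2 ⊔ m3) _ hs2)
    rw [Set.inter_assoc, hA, hB, hC, mul_assoc]
  exact IndepSets.indep (m1 := m1 ⊔ m2) (m2 := m3) (_mΩ := mΩ) (μ := μ) (sup_le h1 h2) h3 hp1
    (@MeasurableSpace.isPiSystem_measurableSet _ m3) hgen1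
    (@MeasurableSpace.generateFrom_measurableSet _ m3).symm hyp

end AuxIndep

set_option maxHeartbeats 2000000 in
/-- Aggregated identified-set restriction (Theorem): for any weighted link
configuration, any `c`, and any two positive-probability values `z, z'` of the
agent characteristics that agree on the retained agents `{i : σ_i ≠ 0}`, the
conditional probability of the positive pattern with `{Σ ω_e δ_e ≤ c}` given
`{Z = z}` plus that of the flipped pattern with `{Σ ω_e δ_e > c}` given
`{Z = z'}` is at most one. -/
theorem weighted_cycle_aggregation_bound
    {Ω : Type*} [MeasurableSpace Ω] (P : Measure Ω) [IsProbabilityMeasure P]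
    {ι : Type*} [Fintype ι] [DecidableEq ι]
    {β : Type*} [MeasurableSpace β] [Countable β] [MeasurableSingletonClass β]
    (Z : ι → Ω → β) (A : ι → Ω → ℝ)
    (hZ : ∀ i, Measurable (Z i)) (hA : ∀ i, Measurable (A i))
    (hindep_pairs : iIndepFun
      (fun i => fun ω0 => (Z i ω0, A i ω0)) P)
    (hident : ∀ i j, IdentDistrib (fun ω0 => (Z i ω0, A i ω0))
      (fun ω0 => (Z j ω0, A j ω0)) P P)
    (E : Finset (Sym2 ι)) (hE : ∀ e ∈ E, ¬ e.IsDiag)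
    (ω : Sym2 ι → ℝ)
    (ε : Sym2 ι → Ω → ℝ) (hε : ∀ e, Measurable (ε e))
    (hindep_shocks : IndepFun
      (fun ω0 => fun e : {e // e ∈ E} => ε e.1 ω0)
      (fun ω0 => fun i : ι => (Z i ω0, A i ω0)) P)
    (δ : Sym2 ι → Ω → ℝ) (hδ : ∀ e, Measurable (δ e))
    (Y : Sym2 ι → Ω → ℝ)
    (hY : Y = fun e ω0 =>
      if Sym2.lift ⟨fun a b => A a ω0 + A b ω0, fun a b => by ring⟩ e + ε e ω0
          ≤ δ e ω0 then (1 : ℝ) else 0)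
    (σ : ι → ℝ)
    (hσ : σ = fun i => ∑ e ∈ E.filter (fun e => i ∈ e), ω e)
    (c : ℝ) (z z' : ι → β)
    (hpos : 0 < P {ω0 | ∀ i, Z i ω0 = z i})
    (hpos' : 0 < P {ω0 | ∀ i, Z i ω0 = z' i})
    (hagree : ∀ i, σ i ≠ 0 → z i = z' i) :
    P[{ω0 | (∀ e ∈ E, 0 < ω e → Y e ω0 = 1) ∧ (∀ e ∈ E, ω e < 0 → Y e ω0 = 0) ∧
          (∑ e ∈ E, ω e * δ e ω0) ≤ c} | {ω0 | ∀ i, Z i ω0 = z i}]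
      + P[{ω0 | (∀ e ∈ E, 0 < ω e → Y e ω0 = 0) ∧ (∀ e ∈ E, ω e < 0 → Y e ω0 = 1) ∧
          c < (∑ e ∈ E, ω e * δ e ω0)} | {ω0 | ∀ i, Z i ω0 = z' i}]
      ≤ 1 := by
  classical
  -- abbreviations
  set L : Sym2 ι → Ω → ℝ := fun e ω0 =>
    Sym2.lift ⟨fun a b => A a ω0 + A b ω0, fun a b => by ring⟩ e with hLdef
  have hY' : Y = fun e ω0 => if L e ω0 + ε e ω0 ≤ δ e ω0 then (1 : ℝ) else 0 := hY
  set R : Finset ι := Finset.univ.filter (fun i => σ i ≠ 0) with hRdef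
  set T : Ω → ℝ :=
    fun ω0 => (∑ i ∈ R, σ i * A i ω0) + ∑ e ∈ E, ω e * ε e ω0 with hTdef
  have hσi : ∀ i, σ i = ∑ e ∈ E.filter (fun e => i ∈ e), ω e := fun i => by rw [hσ]
  -- rearrangement: ∑ ω_e L_e = ∑_{i ∈ R} σ_i A_i
  have hTsum : ∀ ω0, ∑ e ∈ E, ω e * (L e ω0 + ε e ω0) = T ω0 := by
    intro ω0
    have step1 : ∀ (e : Sym2 ι), ¬ e.IsDiag → ω e * L e ω0
        = ∑ i ∈ Finset.univ, if i ∈ e then ω e * A i ω0 else 0 := by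
      intro e
      induction e using Sym2.ind with
      | _ a b =>
        intro hd
        have hab : a ≠ b := fun h => hd (Sym2.mk_isDiag_iff.mpr h)
        have hfil : Finset.univ.filter (fun i => i ∈ s(a, b)) = {a, b} := by
          ext i
          simp [Sym2.mem_iff]
        rw [← Finset.sum_filter, hfil, Finset.sum_pair hab]
        have hLab : L s(a, b) ω0 = A a ω0 + A b ω0 := by
          simp only [hLdef]
          exact Sym2.lift_mk _ a b
        rw [hLab]; ring
    have key : ∑ e ∈ E, ω e * L e ω0 = ∑ i ∈ R, σ i * A i ω0 := by
      calc ∑ e ∈ E, ω e * L e ω0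
          = ∑ e ∈ E, ∑ i ∈ Finset.univ, (if i ∈ e then ω e * A i ω0 else 0) :=
            Finset.sum_congr rfl fun e he => step1 e (hE e he)
        _ = ∑ i ∈ Finset.univ, ∑ e ∈ E, (if i ∈ e then ω e * A i ω0 else 0) :=
            Finset.sum_comm
        _ = ∑ i ∈ Finset.univ, σ i * A i ω0 := by
            refine Finset.sum_congr rfl fun i _ => ?_
            rw [← Finset.sum_filter, hσi i, Finset.sum_mul]
        _ = ∑ i ∈ R, σ i * A i ω0 := by
            rw [hRdef]
            exact (Finset.sum_filter_of_ne fun i _ h => left_ne_zero_of_mul h).symm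
    calc ∑ e ∈ E, ω e * (L e ω0 + ε e ω0)
        = (∑ e ∈ E, ω e * L e ω0) + ∑ e ∈ E, ω e * ε e ω0 := by
          simp only [mul_add, Finset.sum_add_distrib]
      _ = (∑ i ∈ R, σ i * A i ω0) + ∑ e ∈ E, ω e * ε e ω0 := by rw [key]
      _ = T ω0 := rfl
  -- events
  set t1 : Set Ω := {ω0 | ∀ i, Z i ω0 = z i} with ht1def
  set t2 : Set Ω := {ω0 | ∀ i, Z i ω0 = z' i} with ht2def
  set B1 : Set Ω := {ω0 | (∀ e ∈ E, 0 < ω e → Y e ω0 = 1) ∧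
      (∀ e ∈ E, ω e < 0 → Y e ω0 = 0) ∧ (∑ e ∈ E, ω e * δ e ω0) ≤ c} with hB1def
  set B2 : Set Ω := {ω0 | (∀ e ∈ E, 0 < ω e → Y e ω0 = 0) ∧
      (∀ e ∈ E, ω e < 0 → Y e ω0 = 1) ∧ c < (∑ e ∈ E, ω e * δ e ω0)} with hB2def
  set ZR : Set Ω := ⋂ i ∈ R, Z i ⁻¹' {z i} with hZRdef
  set G1 : Set Ω := T ⁻¹' Set.Iic c ∩ ZR with hG1def
  set G1' : Set Ω := T ⁻¹' Set.Ioi c ∩ ZR with hG1'def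
  set G2 : Set Ω := ⋂ i ∈ Rᶜ, Z i ⁻¹' {z i} with hG2def
  set G2' : Set Ω := ⋂ i ∈ Rᶜ, Z i ⁻¹' {z' i} with hG2'def
  -- the relevant random vectors
  set pε : Ω → ({e // e ∈ E} → ℝ) := fun ω0 => fun e : {e // e ∈ E} => ε e.1 ω0 with hpεdef
  set pZA : Ω → (ι → β × ℝ) := fun ω0 => fun i : ι => (Z i ω0, A i ω0) with hpZAdef
  set pR : Ω → ({i // i ∈ R} → β × ℝ) :=
    fun ω0 => fun i : {i // i ∈ R} => (Z i.1 ω0, A i.1 ω0) with hpRdef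
  set pC : Ω → ({i // i ∈ Rᶜ} → β × ℝ) :=
    fun ω0 => fun i : {i // i ∈ Rᶜ} => (Z i.1 ω0, A i.1 ω0) with hpCdef
  have hZAmeas : ∀ i, Measurable (fun ω0 => (Z i ω0, A i ω0)) :=
    fun i => (hZ i).prodMk (hA i)
  have hpεmeas : Measurable pε := measurable_pi_lambda _ fun e => hε e.1
  have hpRmeas : Measurable pR := measurable_pi_lambda _ fun i => hZAmeas i.1
  have hpCmeas : Measurable pC := measurable_pi_lambda _ fun i => hZAmeas i.1
  -- comap σ-algebras of the restricted vectors are below that of the full vector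
  have hRle : MeasurableSpace.comap pR MeasurableSpace.pi
      ≤ MeasurableSpace.comap pZA MeasurableSpace.pi := by
    have hres : Measurable (fun (w : ι → β × ℝ) (i : {i // i ∈ R}) => w i.1) :=
      measurable_pi_lambda _ fun i => measurable_pi_apply _
    rintro s ⟨s', hs', rfl⟩
    exact ⟨(fun (w : ι → β × ℝ) (i : {i // i ∈ R}) => w i.1) ⁻¹' s', hres hs', rfl⟩
  have hCle : MeasurableSpace.comap pC MeasurableSpace.pi
      ≤ MeasurableSpace.comap pZA MeasurableSpace.pi := by
    have hres : Measurable (fun (w : ι → β × ℝ) (i : {i // i ∈ Rᶜ}) => w i.1) :=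
      measurable_pi_lambda _ fun i => measurable_pi_apply _
    rintro s ⟨s', hs', rfl⟩
    exact ⟨(fun (w : ι → β × ℝ) (i : {i // i ∈ Rᶜ}) => w i.1) ⁻¹' s', hres hs', rfl⟩
  -- independence
  have h123 : Indep (MeasurableSpace.comap pε MeasurableSpace.pi)
      (MeasurableSpace.comap pR MeasurableSpace.pi
        ⊔ MeasurableSpace.comap pC MeasurableSpace.pi) P := by
    have h := (IndepFun_iff_Indep _ _ _).mp hindep_shocks
    exact aux_indep_mono_right h (sup_le hRle hCle)
  have h23 : Indep (MeasurableSpace.comap pR MeasurableSpace.pi)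
      (MeasurableSpace.comap pC MeasurableSpace.pi) P := by
    have h := hindep_pairs.indepFun_finset R Rᶜ disjoint_compl_right hZAmeas
    exact (IndepFun_iff_Indep _ _ _).mp h
  have hIndep : Indep
      (MeasurableSpace.comap pε MeasurableSpace.pi
        ⊔ MeasurableSpace.comap pR MeasurableSpace.pi)
      (MeasurableSpace.comap pC MeasurableSpace.pi) P :=
    aux_indep_sup_left hpεmeas.comap_le hpRmeas.comap_le hpCmeas.comap_le h123 h23
  -- measurability of events in the sub-σ-algebras
  have hεbase : Measurable[MeasurableSpace.comap pε MeasurableSpace.pi] pε :=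
    Measurable.of_comap_le le_rfl
  have hRbase : Measurable[MeasurableSpace.comap pR MeasurableSpace.pi] pR :=
    Measurable.of_comap_le le_rfl
  have hCbase : Measurable[MeasurableSpace.comap pC MeasurableSpace.pi] pC :=
    Measurable.of_comap_le le_rfl
  have hmeasRA : ∀ i ∈ R, Measurable[MeasurableSpace.comap pε MeasurableSpace.pi
      ⊔ MeasurableSpace.comap pR MeasurableSpace.pi] (A i) := by
    intro i hi
    have hev : Measurable (fun w : ({x // x ∈ R} → β × ℝ) => w ⟨i, hi⟩) :=
      measurable_pi_apply _
    have h1 : Measurable[MeasurableSpace.comap pR MeasurableSpace.pi] (A i) := by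
      have h2 := (measurable_snd.comp hev).comp hRbase
      exact h2
    exact h1.mono le_sup_right le_rfl
  have hmeasRZ : ∀ i ∈ R, Measurable[MeasurableSpace.comap pε MeasurableSpace.pi
      ⊔ MeasurableSpace.comap pR MeasurableSpace.pi] (Z i) := by
    intro i hi
    have hev : Measurable (fun w : ({x // x ∈ R} → β × ℝ) => w ⟨i, hi⟩) :=
      measurable_pi_apply _
    have h1 : Measurable[MeasurableSpace.comap pR MeasurableSpace.pi] (Z i) := by
      have h2 := (measurable_fst.comp hev).comp hRbase
      exact h2
    exact h1.mono le_sup_right le_rfl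
  have hmeasCZ : ∀ i ∈ Rᶜ, Measurable[MeasurableSpace.comap pC MeasurableSpace.pi] (Z i) := by
    intro i hi
    have hev : Measurable (fun w : ({x // x ∈ Rᶜ} → β × ℝ) => w ⟨i, hi⟩) :=
      measurable_pi_apply _
    have h2 := (measurable_fst.comp hev).comp hCbase
    exact h2
  have hmeasEε : ∀ e ∈ E, Measurable[MeasurableSpace.comap pε MeasurableSpace.pi
      ⊔ MeasurableSpace.comap pR MeasurableSpace.pi] (ε e) := by
    intro e he
    have hev : Measurable (fun w : ({x // x ∈ E} → ℝ) => w ⟨e, he⟩) :=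
      measurable_pi_apply _
    have h1 : Measurable[MeasurableSpace.comap pε MeasurableSpace.pi] (ε e) := by
      have h2 := hev.comp hεbase
      exact h2
    exact h1.mono le_sup_left le_rfl
  have hTmeas : Measurable[MeasurableSpace.comap pε MeasurableSpace.pi
      ⊔ MeasurableSpace.comap pR MeasurableSpace.pi] T := by
    rw [hTdef]
    exact (Finset.measurable_sum R fun i hi => (hmeasRA i hi).const_mul (σ i)).add
      (Finset.measurable_sum E fun e he => (hmeasEε e he).const_mul (ω e))
  have hZRmeas : MeasurableSet[MeasurableSpace.comap pε MeasurableSpace.pi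
      ⊔ MeasurableSpace.comap pR MeasurableSpace.pi] ZR := by
    rw [hZRdef]
    exact Finset.measurableSet_biInter R fun i hi =>
      hmeasRZ i hi (measurableSet_singleton _)
  have hG1meas : MeasurableSet[MeasurableSpace.comap pε MeasurableSpace.pi
      ⊔ MeasurableSpace.comap pR MeasurableSpace.pi] G1 :=
    (hTmeas measurableSet_Iic).inter hZRmeas
  have hG1'meas : MeasurableSet[MeasurableSpace.comap pε MeasurableSpace.pi
      ⊔ MeasurableSpace.comap pR MeasurableSpace.pi] G1' :=
    (hTmeas measurableSet_Ioi).inter hZRmeas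
  have hG2meas : MeasurableSet[MeasurableSpace.comap pC MeasurableSpace.pi] G2 := by
    rw [hG2def]
    exact Finset.measurableSet_biInter Rᶜ fun i hi =>
      hmeasCZ i hi (measurableSet_singleton _)
  have hG2'meas : MeasurableSet[MeasurableSpace.comap pC MeasurableSpace.pi] G2' := by
    rw [hG2'def]
    exact Finset.measurableSet_biInter Rᶜ fun i hi =>
      hmeasCZ i hi (measurableSet_singleton _)
  -- ambient measurability
  have ht1m : MeasurableSet t1 := by
    have h : t1 = ⋂ i, Z i ⁻¹' {z i} := by
      ext ω0; simp [ht1def, Set.mem_iInter]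
    rw [h]
    exact MeasurableSet.iInter fun i => hZ i (measurableSet_singleton _)
  have ht2m : MeasurableSet t2 := by
    have h : t2 = ⋂ i, Z i ⁻¹' {z' i} := by
      ext ω0; simp [ht2def, Set.mem_iInter]
    rw [h]
    exact MeasurableSet.iInter fun i => hZ i (measurableSet_singleton _)
  have hG1'full : MeasurableSet G1' := by
    have hTfull : Measurable T := by
      rw [hTdef]
      exact (Finset.measurable_sum R fun i _ => (hA i).const_mul (σ i)).add
        (Finset.measurable_sum E fun e _ => (hε e).const_mul (ω e))
    refine (hTfull measurableSet_Ioi).inter ?_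
    rw [hZRdef]
    exact Finset.measurableSet_biInter R fun i _ => hZ i (measurableSet_singleton _)
  -- factorizations of t1 and t2
  have ht1Z : t1 = ZR ∩ G2 := by
    ext ω0
    simp only [ht1def, hZRdef, hG2def, Set.mem_setOf_eq, Set.mem_inter_iff,
      Set.mem_iInter, Set.mem_preimage, Set.mem_singleton_iff]
    constructor
    · exact fun h => ⟨fun i _ => h i, fun i _ => h i⟩
    · rintro ⟨h1, h2⟩ i
      by_cases hi : i ∈ R
      · exact h1 i hi
      · exact h2 i (Finset.mem_compl.mpr hi)
  have ht2Z : t2 = ZR ∩ G2' := by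
    ext ω0
    simp only [ht2def, hZRdef, hG2'def, Set.mem_setOf_eq, Set.mem_inter_iff,
      Set.mem_iInter, Set.mem_preimage, Set.mem_singleton_iff]
    constructor
    · refine fun h => ⟨fun i hi => ?_, fun i _ => h i⟩
      rw [hagree i (Finset.mem_filter.mp hi).2]
      exact h i
    · rintro ⟨h1, h2⟩ i
      by_cases hi : i ∈ R
      · rw [← hagree i (Finset.mem_filter.mp hi).2]
        exact h1 i hi
      · exact h2 i (Finset.mem_compl.mpr hi)
  -- pointwise facts about Y
  have hYiff : ∀ e ω0, Y e ω0 = 1 ↔ L e ω0 + ε e ω0 ≤ δ e ω0 := by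
    intro e ω0
    rw [hY']
    by_cases h : L e ω0 + ε e ω0 ≤ δ e ω0
    · simp [h]
    · simp [h]
  have hYiff0 : ∀ e ω0, Y e ω0 = 0 ↔ ¬ (L e ω0 + ε e ω0 ≤ δ e ω0) := by
    intro e ω0
    rw [hY']
    by_cases h : L e ω0 + ε e ω0 ≤ δ e ω0
    · simp [h]
    · simp [h]
  -- event inclusions
  have hsub1 : t1 ∩ B1 ⊆ G1 ∩ G2 := by
    rintro ω0 ⟨hzmem, hB⟩
    have hz : ∀ i, Z i ω0 = z i := hzmem
    obtain ⟨hp, hn, hs⟩ := hB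
    have hZRmem : ω0 ∈ ZR := by
      rw [hZRdef]
      exact Set.mem_iInter₂.mpr fun i _ => hz i
    have hG2mem : ω0 ∈ G2 := by
      rw [hG2def]
      exact Set.mem_iInter₂.mpr fun i _ => hz i
    have hTle : T ω0 ≤ c := by
      have step : ∀ e ∈ E, ω e * (L e ω0 + ε e ω0) ≤ ω e * δ e ω0 := by
        intro e he
        rcases lt_trichotomy (ω e) 0 with h | h | h
        · have h0 := (hYiff0 e ω0).mp (hn e he h)
          exact mul_le_mul_of_nonpos_left (not_le.mp h0).le h.le
        · rw [h, zero_mul, zero_mul]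
        · exact mul_le_mul_of_nonneg_left ((hYiff e ω0).mp (hp e he h)) h.le
      calc T ω0 = ∑ e ∈ E, ω e * (L e ω0 + ε e ω0) := (hTsum ω0).symm
        _ ≤ ∑ e ∈ E, ω e * δ e ω0 := Finset.sum_le_sum step
        _ ≤ c := hs
    exact ⟨⟨hTle, hZRmem⟩, hG2mem⟩
  have hsub2 : t2 ∩ B2 ⊆ G1' ∩ G2' := by
    rintro ω0 ⟨hzmem, hB⟩
    have hz : ∀ i, Z i ω0 = z' i := hzmem
    obtain ⟨hp, hn, hs⟩ := hB
    have hZRmem : ω0 ∈ ZR := by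
      rw [hZRdef]
      refine Set.mem_iInter₂.mpr fun i hi => ?_
      show Z i ω0 = z i
      rw [hagree i (Finset.mem_filter.mp hi).2]
      exact hz i
    have hG2mem : ω0 ∈ G2' := by
      rw [hG2'def]
      exact Set.mem_iInter₂.mpr fun i _ => hz i
    have hTgt : c < T ω0 := by
      have step : ∀ e ∈ E, ω e * δ e ω0 ≤ ω e * (L e ω0 + ε e ω0) := by
        intro e he
        rcases lt_trichotomy (ω e) 0 with h | h | h
        · exact mul_le_mul_of_nonpos_left ((hYiff e ω0).mp (hn e he h)) h.le
        · rw [h, zero_mul, zero_mul]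
        · have h0 := (hYiff0 e ω0).mp (hp e he h)
          exact mul_le_mul_of_nonneg_left (not_le.mp h0).le h.le
      calc c < ∑ e ∈ E, ω e * δ e ω0 := hs
        _ ≤ ∑ e ∈ E, ω e * (L e ω0 + ε e ω0) := Finset.sum_le_sum step
        _ = T ω0 := hTsum ω0
    exact ⟨⟨hTgt, hZRmem⟩, hG2mem⟩
  -- independence identities
  have hI := (Indep_iff _ _ _).mp hIndep
  have e1 : P (G1 ∩ G2) = P G1 * P G2 := hI G1 G2 hG1meas hG2meas
  have e1' : P (G1' ∩ G2') = P G1' * P G2' := hI G1' G2' hG1'meas hG2'meas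
  have e2 : P (ZR ∩ G2) = P ZR * P G2 := hI ZR G2 hZRmeas hG2meas
  have e2' : P (ZR ∩ G2') = P ZR * P G2' := hI ZR G2' hZRmeas hG2'meas
  -- positivity and finiteness
  have ht1eq : P t1 = P ZR * P G2 := by rw [ht1Z, e2]
  have ht2eq : P t2 = P ZR * P G2' := by rw [ht2Z, e2']
  have ha0 : P ZR ≠ 0 := by
    intro h
    rw [ht1eq, h, zero_mul] at hpos
    exact lt_irrefl _ hpos
  have haT : P ZR ≠ ⊤ := measure_ne_top P ZR
  have hb0 : P G2 ≠ 0 := by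
    intro h
    rw [ht1eq, h, mul_zero] at hpos
    exact lt_irrefl _ hpos
  have hbT : P G2 ≠ ⊤ := measure_ne_top P G2
  have hb'0 : P G2' ≠ 0 := by
    intro h
    rw [ht2eq, h, mul_zero] at hpos'
    exact lt_irrefl _ hpos'
  have hb'T : P G2' ≠ ⊤ := measure_ne_top P G2'
  -- conditional probability bounds
  have hbound1 : P[B1 | t1] ≤ (P ZR)⁻¹ * P G1 := by
    rw [cond_apply ht1m]
    calc (P t1)⁻¹ * P (t1 ∩ B1)
        ≤ (P t1)⁻¹ * P (G1 ∩ G2) := mul_le_mul_right (measure_mono hsub1) _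
      _ = (P ZR * P G2)⁻¹ * (P G1 * P G2) := by rw [ht1eq, e1]
      _ = ((P ZR)⁻¹ * P G1) * ((P G2)⁻¹ * P G2) := by
          rw [ENNReal.mul_inv (Or.inl ha0) (Or.inl haT)]; ring
      _ = (P ZR)⁻¹ * P G1 := by rw [ENNReal.inv_mul_cancel hb0 hbT, mul_one]
  have hbound2 : P[B2 | t2] ≤ (P ZR)⁻¹ * P G1' := by
    rw [cond_apply ht2m]
    calc (P t2)⁻¹ * P (t2 ∩ B2)
        ≤ (P t2)⁻¹ * P (G1' ∩ G2') := mul_le_mul_right (measure_mono hsub2) _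
      _ = (P ZR * P G2')⁻¹ * (P G1' * P G2') := by rw [ht2eq, e1']
      _ = ((P ZR)⁻¹ * P G1') * ((P G2')⁻¹ * P G2') := by
          rw [ENNReal.mul_inv (Or.inl ha0) (Or.inl haT)]; ring
      _ = (P ZR)⁻¹ * P G1' := by rw [ENNReal.inv_mul_cancel hb'0 hb'T, mul_one]
  -- combine
  have hdisj : Disjoint G1 G1' := by
    rw [Set.disjoint_left]
    rintro x ⟨hx1, _⟩ ⟨hx2, _⟩
    exact absurd (show c < T x from hx2) (not_lt.mpr (show T x ≤ c from hx1))
  calc P[B1 | t1] + P[B2 | t2]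
      ≤ (P ZR)⁻¹ * P G1 + (P ZR)⁻¹ * P G1' := add_le_add hbound1 hbound2
    _ = (P ZR)⁻¹ * (P G1 + P G1') := (mul_add _ _ _).symm
    _ = (P ZR)⁻¹ * P (G1 ∪ G1') := by rw [measure_union hdisj hG1'full]
    _ ≤ (P ZR)⁻¹ * P ZR := by
        refine mul_le_mul_right (measure_mono ?_) _
        exact Set.union_subset Set.inter_subset_right Set.inter_subset_right
    _ = 1 := ENNReal.inv_mul_cancel ha0 haT
end

section
/- Define the standard logistic CDF Λ(x) := 1/(1 + exp(−x)). For any real numbers A_i, A_j, A_h, A_k and δ_{ij}, δ_{hk}, δ_{ik}, δ_{jh}, setting d_{ab} := δ_{ab} − A_a − A_b for each of the four tetrad pairs, the following holds: Λ(d_{ij}) · Λ(d_{hk}) · (1 − Λ(d_{ik})) · (1 − Λ(d_{jh})) = exp(δ_{ij} + δ_{hk} − δ_{ik} − δ_{jh}) · (1 − Λ(d_{ij})) · (1 − Λ(d_{hk})) · Λ(d_{ik}) · Λ(d_{jh}). In particular, the fixed effects A_i, A_j, A_h, A_k cancel from the odds ratio, which depends only on the tetrad index difference δ_{ij} + δ_{hk}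 − δ_{ik} − δ_{jh}. -/
/-- Algebraic core of the point-identification theorem: under the standard
logistic CDF `Λ(x) = 1/(1 + exp(−x))`, the odds of the tetrad link pattern
relative to the flipped pattern equal `exp` of the tetrad-differenced index,
with all individual fixed effects cancelling. -/
theorem logistic_tetrad_odds_identity
    (Λ : ℝ → ℝ) (hΛ : Λ = fun x => 1 / (1 + Real.exp (-x)))
    (Ai Aj Ah Ak δij δhk δik δjh : ℝ)
    (dij dhk dik djh : ℝ)
    (hdij : dij = δij - Ai - Aj) (hdhk : dhk = δhk - Ah - Ak)
    (hdik : dik = δik - Ai - Ak) (hdjh : djh = δjh - Aj - Ah) :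
    Λ dij * Λ dhk * (1 - Λ dik) * (1 - Λ djh)
      = Real.exp (δij + δhk - δik - δjh)
        * ((1 - Λ dij) * (1 - Λ dhk) * Λ dik * Λ djh) := by
  subst hΛ
  have key : δij + δhk - δik - δjh = dij + dhk - dik - djh := by
    subst hdij hdhk hdik hdjh; ring
  rw [key]
  have h : ∀ x : ℝ, 1 + Real.exp (-x) ≠ 0 := fun x =>
    ne_of_gt (by positivity)
  simp only
  field_simp
  rw [show dij + dhk - dik - djh = dij + dhk + (-dik + -djh) by ring,
    Real.exp_add, Real.exp_add, Real.exp_add]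
  ring
  rw [show Real.exp (-dik) * Real.exp (-djh) * Real.exp dij * Real.exp dhk *
      Real.exp (-dij) * Real.exp (-dhk)
      = Real.exp (-dik) * Real.exp (-djh) * (Real.exp dij * Real.exp (-dij)) *
      (Real.exp dhk * Real.exp (-dhk)) from by ring,
    ← Real.exp_add, ← Real.exp_add]
  simp
  rw [← Real.exp_add]
  simp
end

section
/- Let V be a finite set and Y : V × V → {0, 1} a symmetric function with Y(a,a) = 0 for all a ∈ V. Let i, j, h, k ∈ V be distinct and suppose Y(i,h) = 0 and Y(j,k) = 0. Then for each of the four tetrad pairs (a,b) ∈ {(i,j), (h,k), (i,k), (j,h)}, the common-friends count satisfies Σ_{l ∈ V, l ≠ a, l ≠ b} Y(a,l) · Y(b,l) = Σ_{l ∈ V \ {i,j,h,k}} Y(a,l) · Y(b,l); that is, every within-quadruplet contribution to the common-friends count of a tetrad link vanishes, so the count depends only on links to agents outside the quadruplet and in particular is invariant to the values of Y on the four tetrad links (i,j), (h,k), (i,k), (j,h). -/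
/-- Comparison-pattern invariance of the common-friends count on admissible
tetrads: if the diagonal links are absent (`Y(i,h) = 0`, `Y(j,k) = 0`), then
for each of the four tetrad pairs `(a,b)` the common-friends count
`Σ_{l ≠ a,b} Y(a,l)·Y(b,l)` equals the sum over agents outside the
quadruplet `{i,j,h,k}` only. -/
theorem common_friends_comparison_pattern_invariance
    {V : Type*} [Fintype V] [DecidableEq V]
    (Y : V → V → ℕ)
    (hY01 : ∀ a b, Y a b = 0 ∨ Y a b = 1)
    (hsymm : ∀ a b, Y a b = Y b a)
    (hdiag : ∀ a, Y a a = 0)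
    (i j h k : V)
    (hij : i ≠ j) (hih : i ≠ h) (hik : i ≠ k)
    (hjh : j ≠ h) (hjk : j ≠ k) (hhk : h ≠ k)
    (hYih : Y i h = 0) (hYjk : Y j k = 0) :
    ∀ a b : V,
      ((a, b) = (i, j) ∨ (a, b) = (h, k) ∨ (a, b) = (i, k) ∨ (a, b) = (j, h)) →
      ∑ l ∈ Finset.univ.filter (fun l => l ≠ a ∧ l ≠ b), Y a l * Y b l
        = ∑ l ∈ Finset.univ.filter (fun l => l ∉ ({i, j, h, k} : Finset V)),
            Y a l * Y b l := by
  have main : ∀ a b : V,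
      (∀ l ∈ ({i, j, h, k} : Finset V), Y a l * Y b l = 0) →
      ∑ l ∈ Finset.univ.filter (fun l => l ≠ a ∧ l ≠ b), Y a l * Y b l
        = ∑ l ∈ Finset.univ.filter (fun l => l ∉ ({i, j, h, k} : Finset V)),
            Y a l * Y b l := by
    intro a b hz
    have h1 : ∑ l ∈ Finset.univ.filter (fun l => l ≠ a ∧ l ≠ b), Y a l * Y b l
        = ∑ l : V, Y a l * Y b l := by
      apply Finset.sum_subset (Finset.filter_subset _ _)
      intro x _ hx
      simp only [Finset.mem_filter, Finset.mem_univ, true_and, not_and_or, not_not] at hx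
      rcases hx with rfl | rfl
      · simp [hdiag]
      · simp [hdiag]
    have h2 : ∑ l ∈ Finset.univ.filter (fun l => l ∉ ({i, j, h, k} : Finset V)),
          Y a l * Y b l = ∑ l : V, Y a l * Y b l := by
      apply Finset.sum_subset (Finset.filter_subset _ _)
      intro x _ hx
      simp only [Finset.mem_filter, Finset.mem_univ, true_and, not_not] at hx
      exact hz x hx
    rw [h1, h2]
  rintro a b (⟨rfl, rfl⟩ | ⟨rfl, rfl⟩ | ⟨rfl, rfl⟩ | ⟨rfl, rfl⟩) <;>
    apply main <;>
    intro l hl <;>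
    simp only [Finset.mem_insert, Finset.mem_singleton] at hl <;>
    clear main hY01 <;>
    rcases hl with rfl | rfl | rfl | rfl <;>
    simp_all [hdiag, hsymm, mul_eq_zero]
end
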